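/- Correctness of the spatial translation of counting stars: if e is an environment for the language L, C is a counting star formula in language L, and m ∈ {{1}, {2}, {1,2}}, then ⟦C⟧e = ⟦str_m(C)⟧e^m, i.e. C is true in e iff its spatial translation str_m(C) is true in the marked extension e^m. -/

import Mathlib

/-- An environment (model with variable assignment): interprets unary predicate
symbols from `𝒜`, binary predicate symbols from `ℱ`, and variables from `V`
over the domain `D`. -/
structure Env (𝒜 ℱ V D : Type) where
  un : 𝒜 → D → Prop
  bin : ℱ → D → D → Prop
  var : V → D

variable {𝒜 ℱ V D : Type}

/-- `e.Split e₁ e₂`: the relations of `e` split as a disjoint union into `e₁`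
and `e₂`, and the variable assignments agree with those of `e`. -/
def Env.Split (e e₁ e₂ : Env 𝒜 ℱ V D) : Prop :=
  e₁.var = e.var ∧ e₂.var = e.var ∧
  (∀ A d, (e.un A d ↔ (e₁.un A d ∨ e₂.un A d)) ∧ ¬(e₁.un A d ∧ e₂.un A d)) ∧
  (∀ f d₁ d₂, (e.bin f d₁ d₂ ↔ (e₁.bin f d₁ d₂ ∨ e₂.bin f d₁ d₂)) ∧
      ¬(e₁.bin f d₁ d₂ ∧ e₂.bin f d₁ d₂))

/-- Spatial conjunction of predicates on environments. -/
def spand (P Q : Env 𝒜 ℱ V D → Prop) (e : Env 𝒜 ℱ V D) : Prop :=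
  ∃ e₁ e₂, e.Split e₁ e₂ ∧ P e₁ ∧ Q e₂

/-! ## Syntax and semantics of first-order logic with counting quantifiers -/

/-- Counting quantifier specifications: `∃^{=k}` and `∃^{≥k}`. -/
inductive CQ : Type where
  | exact : ℕ → CQ
  | atLeast : ℕ → CQ
deriving DecidableEq

/-- A counting quantifier specification is satisfied by a cardinality `c`. -/
def CQ.sat : CQ → ℕ → Prop
  | .exact k, c => c = k
  | .atLeast k, c => k ≤ c

/-- `c ∈ C_{k+1}`: `c` is `=i` for some `i ≤ k`, or `≥ k+1`. -/
def CQ.degLE (k : ℕ) : CQ → Prop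
  | .exact i => i ≤ k
  | .atLeast i => i = k + 1

/-- Formulas of first-order predicate calculus with equality and counting
quantifiers, over unary symbols `𝒜`, binary symbols `ℱ`, variables `V`. -/
inductive Fml (𝒜 ℱ V : Type) : Type where
  | un : 𝒜 → V → Fml 𝒜 ℱ V
  | bin : ℱ → V → V → Fml 𝒜 ℱ V
  | eq : V → V → Fml 𝒜 ℱ V
  | fls : Fml 𝒜 ℱ V
  | and : Fml 𝒜 ℱ V → Fml 𝒜 ℱ V → Fml 𝒜 ℱ V
  | or : Fml 𝒜 ℱ V → Fml 𝒜 ℱ V → Fml 𝒜 ℱ V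
  | not : Fml 𝒜 ℱ V → Fml 𝒜 ℱ V
  | cnt : CQ → V → Fml 𝒜 ℱ V → Fml 𝒜 ℱ V

/-- Update the value of a variable in an environment. -/
def Env.updVar [DecidableEq V] (e : Env 𝒜 ℱ V D) (v : V) (d : D) : Env 𝒜 ℱ V D :=
  { e with var := Function.update e.var v d }

/-- Satisfaction of a formula in an environment. -/
def Fml.Sat [DecidableEq V] : Fml 𝒜 ℱ V → Env 𝒜 ℱ V D → Prop
  | .un A v, e => e.un A (e.var v)
  | .bin f v w, e => e.bin f (e.var v) (e.var w)
  | .eq v w, e => e.var v = e.var w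
  | .fls, _ => False
  | .and F G, e => F.Sat e ∧ G.Sat e
  | .or F G, e => F.Sat e ∨ G.Sat e
  | .not F, e => ¬ F.Sat e
  | .cnt c v F, e => c.sat {d : D | F.Sat (e.updVar v d)}.ncard

/-- Quantifier depth; each counting quantifier counts as one quantifier. -/
def Fml.qdepth : Fml 𝒜 ℱ V → ℕ
  | .un _ _ => 0
  | .bin _ _ _ => 0
  | .eq _ _ => 0
  | .fls => 0
  | .and F G => max F.qdepth G.qdepth
  | .or F G => max F.qdepth G.qdepth
  | .not F => F.qdepth
  | .cnt _ _ F => F.qdepth + 1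

/-- Free variables of a formula. -/
def Fml.fv [DecidableEq V] : Fml 𝒜 ℱ V → Finset V
  | .un _ v => {v}
  | .bin _ v w => {v, w}
  | .eq v w => {v, w}
  | .fls => ∅
  | .and F G => F.fv ∪ G.fv
  | .or F G => F.fv ∪ G.fv
  | .not F => F.fv
  | .cnt _ v F => F.fv.erase v

/-- `F.DegLE k`: `F` has counting degree at most `k`, i.e. all counting
quantifiers of `F` are `∃^c` with `c ∈ C_{k+1}`. -/
def Fml.DegLE (k : ℕ) : Fml 𝒜 ℱ V → Prop
  | .un _ _ => True
  | .bin _ _ _ => True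
  | .eq _ _ => True
  | .fls => True
  | .and F G => F.DegLE k ∧ G.DegLE k
  | .or F G => F.DegLE k ∧ G.DegLE k
  | .not F => F.DegLE k
  | .cnt c _ F => c.degLE k ∧ F.DegLE k

/-! ## Atomic formulas, complete atomic types -/

/-- Atomic formulas over unary symbols `𝒜`, binary symbols `ℱ`, variables `V`
(including equality atoms). -/
inductive Atom (𝒜 ℱ V : Type) : Type where
  | un : 𝒜 → V → Atom 𝒜 ℱ V
  | bin : ℱ → V → V → Atom 𝒜 ℱ V
  | eq : V → V → Atom 𝒜 ℱ V
deriving DecidableEq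

def Atom.toFml : Atom 𝒜 ℱ V → Fml 𝒜 ℱ V
  | .un A v => .un A v
  | .bin f v w => .bin f v w
  | .eq v w => .eq v w

/-- The variables occurring in an atomic formula. -/
def Atom.varset [DecidableEq V] : Atom 𝒜 ℱ V → Finset V
  | .un _ v => {v}
  | .bin _ v w => {v, w}
  | .eq v w => {v, w}

/-- Whether an atom is an equality atom. -/
def Atom.isEq : Atom 𝒜 ℱ V → Bool
  | .eq _ _ => true
  | _ => false

def atomEquiv (𝒜 ℱ V : Type) :
    Atom 𝒜 ℱ V ≃ ((𝒜 × V) ⊕ ((ℱ × V × V) ⊕ (V × V))) where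
  toFun a := match a with
    | .un A v => Sum.inl (A, v)
    | .bin f v w => Sum.inr (Sum.inl (f, v, w))
    | .eq v w => Sum.inr (Sum.inr (v, w))
  invFun s := match s with
    | Sum.inl (A, v) => .un A v
    | Sum.inr (Sum.inl (f, v, w)) => .bin f v w
    | Sum.inr (Sum.inr (v, w)) => .eq v w
  left_inv a := by cases a <;> rfl
  right_inv s := by rcases s with ⟨A, v⟩ | ⟨f, v, w⟩ | ⟨v, w⟩ <;> rfl

instance [Fintype 𝒜] [Fintype ℱ] [Fintype V] : Fintype (Atom 𝒜 ℱ V) :=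
  Fintype.ofEquiv _ (atomEquiv 𝒜 ℱ V).symm

/-- Conjunction of a list of formulas (empty conjunction is `¬⊥`, i.e. true). -/
def listConj (l : List (Fml 𝒜 ℱ V)) : Fml 𝒜 ℱ V := l.foldr .and (.not .fls)

/-- Disjunction of a list of formulas (empty disjunction is `⊥`). -/
def listDisj (l : List (Fml 𝒜 ℱ V)) : Fml 𝒜 ℱ V := l.foldr .or .fls

/-- Conjunction of a list of atoms, each taken positively or negatively
according to the sign assignment `σ`. -/
def signedConj (l : List (Atom 𝒜 ℱ V)) (σ : Atom 𝒜 ℱ V → Bool) : Fml 𝒜 ℱ V :=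
  listConj (l.map fun a => if σ a then a.toFml else .not a.toFml)

section AtomicTypes

variable [Fintype 𝒜] [DecidableEq 𝒜] [Fintype ℱ] [DecidableEq ℱ]
  [Fintype V] [DecidableEq V]

/-- The list of all atomic formulas whose variables are among `xs`. -/
noncomputable def atomsOn (𝒜 ℱ : Type) [Fintype 𝒜] [DecidableEq 𝒜] [Fintype ℱ] [DecidableEq ℱ]
    {V : Type} [Fintype V] [DecidableEq V] (xs : Finset V) : List (Atom 𝒜 ℱ V) :=
  (Finset.univ : Finset (Atom 𝒜 ℱ V)).toList.filter fun a => decide (a.varset ⊆ xs)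

/-- The complete atomic type (CAT) formula with free variables `{x₁,…,xₙ}`
(the whole of `V`) determined by a sign assignment `σ`: the conjunction
containing, for each atomic formula `C` over `V`, the conjunct `C` if
`σ C = true` and the conjunct `¬C` otherwise. -/
noncomputable def catFml (σ : Atom 𝒜 ℱ V → Bool) : Fml 𝒜 ℱ V :=
  signedConj (Finset.univ : Finset (Atom 𝒜 ℱ V)).toList σ

/-- The CAT formula over the variable subset `xs` determined by `σ`. -/
noncomputable def gccatFml (xs : Finset V) (σ : Atom 𝒜 ℱ V → Bool) : Fml 𝒜 ℱ V :=
  signedConj (atomsOn 𝒜 ℱ xs) σ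

/-- `σ` is a general-case CAT (GCCAT) sign assignment over the variables `xs`:
the conjunct `xᵢ = xⱼ` occurs (positively) iff `i = j`, and (canonically) `σ`
is `false` outside the atoms over `xs`. -/
noncomputable def gccatSignB (xs : Finset V) (σ : Atom 𝒜 ℱ V → Bool) : Bool :=
  (xs.toList.all fun i => xs.toList.all fun j => σ (.eq i j) == decide (i = j)) &&
  ((Finset.univ : Finset (Atom 𝒜 ℱ V)).toList.all fun a =>
      decide (a.varset ⊆ xs) || !σ a)

/-- `a` is an atom of an `x`-extension: its variables are among `insert x xs`
and `x` actually occurs in it. -/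
def isExtAtom (xs : Finset V) (x : V) (a : Atom 𝒜 ℱ V) : Bool :=
  decide (a.varset ⊆ insert x xs) && decide (x ∈ a.varset)

/-- The list of atoms of `x`-extensions of GCCAT formulas over `xs`. -/
noncomputable def extAtoms (𝒜 ℱ : Type) [Fintype 𝒜] [DecidableEq 𝒜] [Fintype ℱ] [DecidableEq ℱ]
    {V : Type} [Fintype V] [DecidableEq V] (xs : Finset V) (x : V) : List (Atom 𝒜 ℱ V) :=
  (Finset.univ : Finset (Atom 𝒜 ℱ V)).toList.filter (isExtAtom xs x)

/-- The `x`-extension formula determined by a sign assignment `τ`. -/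
noncomputable def extFml (xs : Finset V) (x : V) (τ : Atom 𝒜 ℱ V → Bool) : Fml 𝒜 ℱ V :=
  signedConj (extAtoms 𝒜 ℱ xs x) τ

/-- `τ` is the sign assignment of an `x`-extension of a GCCAT formula over
`xs`: `x = x` positive, `x = xᵢ` and `xᵢ = x` negative, and (canonically) `τ`
is `false` outside extension atoms. -/
noncomputable def extSignB (xs : Finset V) (x : V) (τ : Atom 𝒜 ℱ V → Bool) : Bool :=
  τ (.eq x x) &&
  (xs.toList.all fun v => !τ (.eq x v) && !τ (.eq v x)) &&
  ((Finset.univ : Finset (Atom 𝒜 ℱ V)).toList.all fun a => isExtAtom xs x a || !τ a)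

/-- The list of all sign assignments of `x`-extensions over `xs`. -/
noncomputable def extSigns (𝒜 ℱ : Type) [Fintype 𝒜] [DecidableEq 𝒜] [Fintype ℱ] [DecidableEq ℱ]
    {V : Type} [Fintype V] [DecidableEq V] (xs : Finset V) (x : V) :
    List (Atom 𝒜 ℱ V → Bool) :=
  (Finset.univ : Finset (Atom 𝒜 ℱ V → Bool)).toList.filter (extSignB xs x)

/-- Merge of two sign assignments: the union of their positive literals. -/
def mergeSign (τ₁ τ₂ : Atom 𝒜 ℱ V → Bool) : Atom 𝒜 ℱ V → Bool :=
  fun a => τ₁ a || τ₂ a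

end AtomicTypes

/-- `T₁ ⊛ T₂` is defined iff the sets `S(T₁)`, `S(T₂)` of positive
non-equality literals are disjoint. -/
def MergeOK (τ₁ τ₂ : Atom 𝒜 ℱ V → Bool) : Prop :=
  ∀ a : Atom 𝒜 ℱ V, a.isEq = false → ¬(τ₁ a = true ∧ τ₂ a = true)

/-! ## Counting star formulas over the language `L`

Variables are `Option (Fin n ⊕ Fin m)`: `some (inl i)` is the GCCAT variable
`xᵢ`, `some (inr j)` is the variable `yⱼ` of an equality conjunct, and `none`
is the bound variable `x` of the counting quantifiers. -/

/-- The variable type of counting star formulas. -/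
abbrev VV (n m : ℕ) : Type := Option (Fin n ⊕ Fin m)

/-- The variable `xᵢ`. -/
def xvar {n m : ℕ} (i : Fin n) : VV n m := some (Sum.inl i)

/-- The variable `yⱼ`. -/
def yvar {n m : ℕ} (j : Fin m) : VV n m := some (Sum.inr j)

/-- The set `{x₁,…,xₙ}` of GCCAT variables. -/
def XS (n m : ℕ) : Finset (VV n m) :=
  (Finset.univ : Finset (Fin n)).image (fun i => xvar i)

/-- Data of a counting star formula: the equality map `ι` (conjuncts
`yⱼ = x_{ι j}`), the GCCAT sign assignment `σ` over `{x₁,…,xₙ}`, and the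
counting function `γ` on `x`-extensions. -/
structure CStar (𝒜 ℱ : Type) (n m : ℕ) where
  ι : Fin m → Fin n
  σ : Atom 𝒜 ℱ (VV n m) → Bool
  γ : (Atom 𝒜 ℱ (VV n m) → Bool) → CQ

/-- Well-formedness: `σ` is a GCCAT sign assignment over `{x₁,…,xₙ}`. -/
def CStar.WF {𝒜 ℱ : Type} [Fintype 𝒜] [DecidableEq 𝒜] [Fintype ℱ] [DecidableEq ℱ]
    {n m : ℕ} (c : CStar 𝒜 ℱ n m) : Prop :=
  gccatSignB (XS n m) c.σ = true

/-- The counting star formula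
`⋀_j yⱼ = x_{ι j} ∧ F_σ ∧ ⋀_{F′ ∈ ext(F_σ, x)} ∃^{γ(F′)} x. F′`. -/
noncomputable def csFml {𝒜 ℱ : Type}
    [Fintype 𝒜] [DecidableEq 𝒜] [Fintype ℱ] [DecidableEq ℱ] {n m : ℕ}
    (c : CStar 𝒜 ℱ n m) : Fml 𝒜 ℱ (VV n m) :=
  (listConj ((List.finRange m).map fun j => Fml.eq (yvar j) (xvar (c.ι j)))).and <|
  (gccatFml (XS n m) c.σ).and <|
  listConj ((extSigns 𝒜 ℱ (XS n m) none).map fun τ =>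
    Fml.cnt (c.γ τ) none (extFml (XS n m) none τ))

/-! ## The marked language `L′ = L ∪ {B₁, B₂}` and spatial building blocks

The unary symbols of `L′` are `𝒜 ⊕ Fin 2`; `Sum.inr 0` is the marker `B₁` and
`Sum.inr 1` is the marker `B₂`.  A marking `m ⊆ {1,2}` is a `Finset (Fin 2)`. -/

/-- The marking `{1}`. -/
def mk1 : Finset (Fin 2) := {0}
/-- The marking `{2}`. -/
def mk2 : Finset (Fin 2) := {1}
/-- The marking `{1,2}`. -/
def mk12 : Finset (Fin 2) := {0, 1}

/-- The `L′`-environment `e^m` obtained from an `L`-environment `e`: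
the marker `B_q` holds of `d` iff `q ∈ m` and `d ∉ {e(x₁),…,e(xₙ)}`. -/
def markEnv {𝒜 ℱ D : Type} {n m : ℕ} (e : Env 𝒜 ℱ (VV n m) D)
    (mk : Finset (Fin 2)) : Env (𝒜 ⊕ Fin 2) ℱ (VV n m) D where
  un := Sum.elim e.un (fun q d => q ∈ mk ∧ ∀ i : Fin n, d ≠ e.var (xvar i))
  bin := e.bin
  var := e.var

/-- The restriction `e|L` of an `L′`-environment to the language `L`. -/
def unmarkEnv {𝒜 ℱ D : Type} {n m : ℕ} (e : Env (𝒜 ⊕ Fin 2) ℱ (VV n m) D) :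
    Env 𝒜 ℱ (VV n m) D where
  un := fun A => e.un (Sum.inl A)
  bin := e.bin
  var := e.var

/-- The spatial building blocks of the translations `str_m` of counting stars:
`kstr(F_σ)`, `empe`, `oneNum_m(T)` and `anyNum_m(T)`. -/
inductive Blk (𝒜 ℱ : Type) (n m : ℕ) : Type where
  | kstr (σ : Atom 𝒜 ℱ (VV n m) → Bool) : Blk 𝒜 ℱ n m
  | empe : Blk 𝒜 ℱ n m
  | oneNum (mk : Finset (Fin 2)) (τ : Atom 𝒜 ℱ (VV n m) → Bool) : Blk 𝒜 ℱ n m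
  | anyNum (mk : Finset (Fin 2)) (τ : Atom 𝒜 ℱ (VV n m) → Bool) : Blk 𝒜 ℱ n m

section BlkSem

variable {𝒜 ℱ D : Type} [Fintype 𝒜] [DecidableEq 𝒜] [Fintype ℱ] [DecidableEq ℱ]
  {n m : ℕ}

/-- `d` is outside `{e(x₁),…,e(xₙ)}` (the guard `⋀ᵢ x ≠ xᵢ`). -/
def guardAt (e : Env (𝒜 ⊕ Fin 2) ℱ (VV n m) D) (d : D) : Prop :=
  ∀ i : Fin n, d ≠ e.var (xvar i)

/-- Truth of an `L`-atom in an `L′`-environment under a valuation `ρ`. -/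
def Atom.holdsAt (e : Env (𝒜 ⊕ Fin 2) ℱ (VV n m) D) (ρ : VV n m → D) :
    Atom 𝒜 ℱ (VV n m) → Prop
  | .un A v => e.un (Sum.inl A) (ρ v)
  | .bin f v w => e.bin f (ρ v) (ρ w)
  | .eq v w => ρ v = ρ w

/-- The GCCAT formula of `σ` over `{x₁,…,xₙ}` holds in `e`. -/
def gccatTruth (e : Env (𝒜 ⊕ Fin 2) ℱ (VV n m) D)
    (σ : Atom 𝒜 ℱ (VV n m) → Bool) : Prop :=
  ∀ a : Atom 𝒜 ℱ (VV n m), a.varset ⊆ XS n m →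
    (a.holdsAt e e.var ↔ σ a = true)

/-- The `x`-extension of `σ` with sign `τ` holds in `e` with `x ↦ d`. -/
def extTruth (e : Env (𝒜 ⊕ Fin 2) ℱ (VV n m) D) (d : D)
    (τ : Atom 𝒜 ℱ (VV n m) → Bool) : Prop :=
  ∀ a : Atom 𝒜 ℱ (VV n m), isExtAtom (XS n m) none a = true →
    (a.holdsAt e (Function.update e.var none d) ↔ τ a = true)

/-- `Mark_mk(x)` holds of `d` in `e`: `B_q(d)` iff `q ∈ mk`. -/
def markTruth (e : Env (𝒜 ⊕ Fin 2) ℱ (VV n m) D) (d : D)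
    (mk : Finset (Fin 2)) : Prop :=
  ∀ q : Fin 2, e.un (Sum.inr q) d ↔ q ∈ mk

/-- The sign assignment of the empty extension: only `x = x` is positive. -/
def emptyExtSign : Atom 𝒜 ℱ (VV n m) → Bool :=
  fun a => decide (a = Atom.eq none none)

/-- The sign assignment of the empty GCCAT formula: only the trivial
equalities `xᵢ = xᵢ` are positive. -/
def emptyGSign : Atom 𝒜 ℱ (VV n m) → Bool :=
  fun a => match a with
    | .eq v w => decide (v = w)
    | _ => false

/-- `allEmptyExt(x)` holds of `d` in `e`: the empty extension together with
`Mark_∅(x)`. -/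
def allEmptyAt (e : Env (𝒜 ⊕ Fin 2) ℱ (VV n m) D) (d : D) : Prop :=
  extTruth e d emptyExtSign ∧ markTruth e d ∅

/-- Semantics of the building blocks as predicates on `L′`-environments. -/
def Blk.sem : Blk 𝒜 ℱ n m → Env (𝒜 ⊕ Fin 2) ℱ (VV n m) D → Prop
  | .kstr σ => fun e => gccatTruth e σ ∧ ∀ d, guardAt e d → allEmptyAt e d
  | .empe => fun e => gccatTruth e emptyGSign ∧ ∀ d, guardAt e d → allEmptyAt e d
  | .anyNum mk τ => fun e => gccatTruth e emptyGSign ∧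
      ∀ d, guardAt e d → ((extTruth e d τ ∧ markTruth e d mk) ∨ allEmptyAt e d)
  | .oneNum mk τ => fun e =>
      (gccatTruth e emptyGSign ∧
        ∀ d, guardAt e d → ((extTruth e d τ ∧ markTruth e d mk) ∨ allEmptyAt e d)) ∧
      {d : D | guardAt e d ∧ extTruth e d τ ∧ markTruth e d mk}.ncard = 1

/-- `emp`: all predicates are interpreted by empty relations. -/
def emp' {𝒜' ℱ' V' D' : Type} : Env 𝒜' ℱ' V' D' → Prop := fun e =>
  (∀ A d, ¬ e.un A d) ∧ (∀ f d₁ d₂, ¬ e.bin f d₁ d₂)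

/-- Semantics of a finite spatial conjunction of building blocks (an empty
conjunction is `emp`). -/
noncomputable def semM (s : Multiset (Blk 𝒜 ℱ n m))
    (e : Env (𝒜 ⊕ Fin 2) ℱ (VV n m) D) : Prop :=
  (s.toList.foldr (fun b P => spand (Blk.sem b) P) emp') e

end BlkSem

section Rules

variable {𝒜 ℱ : Type} [Fintype 𝒜] [DecidableEq 𝒜] [Fintype ℱ] [DecidableEq ℱ]
  {n m : ℕ}

/-- The transformation rules (1)–(4) for combining spatial conjuncts,
applicable only when `T₁ ⊛ T₂` is defined. -/
inductive Rule14 : Multiset (Blk 𝒜 ℱ n m) → Multiset (Blk 𝒜 ℱ n m) → Prop where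
  | r1 (τ₁ τ₂ : Atom 𝒜 ℱ (VV n m) → Bool) :
      extSignB (XS n m) none τ₁ = true → extSignB (XS n m) none τ₂ = true →
      MergeOK τ₁ τ₂ →
      Rule14 {Blk.oneNum mk1 τ₁, Blk.oneNum mk2 τ₂}
             {Blk.oneNum mk12 (mergeSign τ₁ τ₂)}
  | r2 (τ₁ τ₂ : Atom 𝒜 ℱ (VV n m) → Bool) :
      extSignB (XS n m) none τ₁ = true → extSignB (XS n m) none τ₂ = true →
      MergeOK τ₁ τ₂ →
      Rule14 {Blk.oneNum mk1 τ₁, Blk.anyNum mk2 τ₂}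
             {Blk.oneNum mk12 (mergeSign τ₁ τ₂), Blk.anyNum mk2 τ₂}
  | r3 (τ₁ τ₂ : Atom 𝒜 ℱ (VV n m) → Bool) :
      extSignB (XS n m) none τ₁ = true → extSignB (XS n m) none τ₂ = true →
      MergeOK τ₁ τ₂ →
      Rule14 {Blk.anyNum mk1 τ₁, Blk.oneNum mk2 τ₂}
             {Blk.anyNum mk1 τ₁, Blk.oneNum mk12 (mergeSign τ₁ τ₂)}
  | r4 (τ₁ τ₂ : Atom 𝒜 ℱ (VV n m) → Bool) :
      extSignB (XS n m) none τ₁ = true → extSignB (XS n m) none τ₂ = true →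
      MergeOK τ₁ τ₂ →
      Rule14 {Blk.anyNum mk1 τ₁, Blk.anyNum mk2 τ₂}
             {Blk.anyNum mk1 τ₁, Blk.anyNum mk2 τ₂,
              Blk.anyNum mk12 (mergeSign τ₁ τ₂)}

/-- The transformation rules (5) and (6). -/
inductive Rule56 : Multiset (Blk 𝒜 ℱ n m) → Multiset (Blk 𝒜 ℱ n m) → Prop where
  | r5 (τ : Atom 𝒜 ℱ (VV n m) → Bool) :
      extSignB (XS n m) none τ = true →
      Rule56 {Blk.anyNum mk1 τ} {Blk.empe}
  | r6 (τ : Atom 𝒜 ℱ (VV n m) → Bool) :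
      extSignB (XS n m) none τ = true →
      Rule56 {Blk.anyNum mk2 τ} {Blk.empe}

/-- One of the six transformation rules. -/
def Rule (G₁ G₂ : Multiset (Blk 𝒜 ℱ n m)) : Prop :=
  Rule14 G₁ G₂ ∨ Rule56 G₁ G₂

/-- Structural equivalence steps: `⋆` is applied modulo the unit law for the
(empty-heap) conjunct `empe` and the idempotence of `anyNum`. -/
inductive SEq : Multiset (Blk 𝒜 ℱ n m) → Multiset (Blk 𝒜 ℱ n m) → Prop where
  | empeIntro (s : Multiset (Blk 𝒜 ℱ n m)) : SEq s (Blk.empe ::ₘ s)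
  | empeElim (s : Multiset (Blk 𝒜 ℱ n m)) : SEq (Blk.empe ::ₘ s) s
  | anyDup (mk : Finset (Fin 2)) (τ : Atom 𝒜 ℱ (VV n m) → Bool)
      (s : Multiset (Blk 𝒜 ℱ n m)) :
      SEq (Blk.anyNum mk τ ::ₘ s) (Blk.anyNum mk τ ::ₘ Blk.anyNum mk τ ::ₘ s)
  | anyContract (mk : Finset (Fin 2)) (τ : Atom 𝒜 ℱ (VV n m) → Bool)
      (s : Multiset (Blk 𝒜 ℱ n m)) :
      SEq (Blk.anyNum mk τ ::ₘ Blk.anyNum mk τ ::ₘ s) (Blk.anyNum mk τ ::ₘ s)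

/-- A single step of the rewriting used in the `⊳` (yields) relation: a rule
applied inside a spatial context (modulo associativity and commutativity,
which the multiset representation provides), where rules (5), (6) may be
applied only when rules (1)–(4) are not applicable; or a structural step. -/
inductive YStep : Multiset (Blk 𝒜 ℱ n m) → Multiset (Blk 𝒜 ℱ n m) → Prop where
  | ofR14 (G₁ G₂ s : Multiset (Blk 𝒜 ℱ n m)) :
      Rule14 G₁ G₂ → YStep (G₁ + s) (G₂ + s)
  | ofR56 (G₁ G₂ s : Multiset (Blk 𝒜 ℱ n m)) :
      Rule56 G₁ G₂ →
      (¬ ∃ H₁ H₂ : Multiset (Blk 𝒜 ℱ n m), Rule14 H₁ H₂ ∧ H₁ ≤ G₁ + s) →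
      YStep (G₁ + s) (G₂ + s)
  | struct (s₁ s₂ : Multiset (Blk 𝒜 ℱ n m)) : SEq s₁ s₂ → YStep s₁ s₂

/-- All `oneNum`/`anyNum` conjuncts carry the marking `{1,2}`. -/
def OnlyFinal (s : Multiset (Blk 𝒜 ℱ n m)) : Prop :=
  ∀ b ∈ s, ∀ (mk : Finset (Fin 2)) (τ : Atom 𝒜 ℱ (VV n m) → Bool),
    (b = Blk.oneNum mk τ ∨ b = Blk.anyNum mk τ) → mk = mk12

/-- The yields relation `G₁ ⊳ G₂`, where `G₂ : Option _` with `none`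
representing `⊥`: first the conjunction `kstr(F₁) ⋆ kstr(F₂)` is replaced by
`kstr(F₁ ⊛ F₂)`, or by `⊥` if `F₁ ⊛ F₂` is undefined; then a sequence of the
transformation rules is applied (with rules (5), (6) applied only when rules
(1)–(4) are inapplicable), such that the result contains only spatial
`oneNum`/`anyNum` conjuncts of the forms `oneNum_{1,2}` and `anyNum_{1,2}`. -/
def Yields (s₁ : Multiset (Blk 𝒜 ℱ n m)) : Option (Multiset (Blk 𝒜 ℱ n m)) → Prop
  | none => ∃ (σ₁ σ₂ : Atom 𝒜 ℱ (VV n m) → Bool) (rest : Multiset (Blk 𝒜 ℱ n m)),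
      s₁ = Blk.kstr σ₁ ::ₘ Blk.kstr σ₂ ::ₘ rest ∧ ¬ MergeOK σ₁ σ₂
  | some s₂ => ∃ (σ₁ σ₂ : Atom 𝒜 ℱ (VV n m) → Bool) (rest : Multiset (Blk 𝒜 ℱ n m)),
      s₁ = Blk.kstr σ₁ ::ₘ Blk.kstr σ₂ ::ₘ rest ∧ MergeOK σ₁ σ₂ ∧
      Relation.ReflTransGen YStep (Blk.kstr (mergeSign σ₁ σ₂) ::ₘ rest) s₂ ∧
      OnlyFinal s₂

/-- The spatial translation `xstr_mk(∃^{s} x. F′_τ)` as a multiset of spatial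
conjuncts: `∃^{=k}` becomes `k` copies of `oneNum` (and `empe`), and `∃^{≥k}`
additionally has an `anyNum` conjunct. -/
def xstrBlocks (mk : Finset (Fin 2)) (τ : Atom 𝒜 ℱ (VV n m) → Bool) :
    CQ → Multiset (Blk 𝒜 ℱ n m)
  | .exact k => Multiset.replicate k (Blk.oneNum mk τ) + {Blk.empe}
  | .atLeast k => Multiset.replicate k (Blk.oneNum mk τ) + {Blk.empe, Blk.anyNum mk τ}

/-- The spatial conjuncts of the translation `str_mk(C)` of a counting star
formula `C`: `kstr(F_σ) ⋆ ⋆_{τ} xstr_mk(∃^{γ τ} x. F′_τ)`. -/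
noncomputable def strBlocks (mk : Finset (Fin 2)) (c : CStar 𝒜 ℱ n m) :
    Multiset (Blk 𝒜 ℱ n m) :=
  Blk.kstr c.σ ::ₘ
    ((extSigns 𝒜 ℱ (XS n m) none).map fun τ => xstrBlocks mk τ (c.γ τ)).sum

/-- Satisfaction of the equality part `E ≡ ⋀_j yⱼ = x_{ι j}`. -/
def eqSat {𝒜' D : Type} (c : CStar 𝒜 ℱ n m) (e : Env 𝒜' ℱ (VV n m) D) : Prop :=
  ∀ j : Fin m, e.var (yvar j) = e.var (xvar (c.ι j))

/-- Truth of the translation `str_mk(C) = E ∧ (spatial conjunction of blocks)`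
in an `L′`-environment. -/
noncomputable def strSat {D : Type} (mk : Finset (Fin 2)) (c : CStar 𝒜 ℱ n m)
    (e : Env (𝒜 ⊕ Fin 2) ℱ (VV n m) D) : Prop :=
  eqSat c e ∧ semM (strBlocks mk c) e

/-- `ERes C₁ C₂ C₃`: the counting stars have the same equality part and
`str₁(C₁) ⋆ str₂(C₂) ⊳ str₁,₂(C₃)`. -/
noncomputable def ERes (c₁ c₂ c₃ : CStar 𝒜 ℱ n m) : Prop :=
  c₁.ι = c₂.ι ∧ c₂.ι = c₃.ι ∧
  Yields (strBlocks mk1 c₁ + strBlocks mk2 c₂) (some (strBlocks mk12 c₃))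

end Rules


section AuxGeneric
set_option linter.unusedSectionVars false
variable {V : Type}

-- auxiliary
theorem Env.ext' {e₁ e₂ : Env 𝒜 ℱ V D} (hu : ∀ A d, e₁.un A d ↔ e₂.un A d)
    (hb : ∀ f d₁ d₂, e₁.bin f d₁ d₂ ↔ e₂.bin f d₁ d₂) (hv : e₁.var = e₂.var) : e₁ = e₂ := by
  cases e₁; cases e₂
  simp only [Env.mk.injEq]
  exact ⟨funext fun A => funext fun d => propext (hu A d),
    funext fun f => funext fun a => funext fun b => propext (hb f a b), hv⟩

theorem Env.Split.comm {e e₁ e₂ : Env 𝒜 ℱ V D} (h : e.Split e₁ e₂) : e.Split e₂ e₁ := by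
  obtain ⟨h1, h2, h3, h4⟩ := h
  refine ⟨h2, h1, fun A d => ⟨?_, ?_⟩, fun f a b => ⟨?_, ?_⟩⟩
  · rw [(h3 A d).1]; tauto
  · have := (h3 A d).2; tauto
  · rw [(h4 f a b).1]; tauto
  · have := (h4 f a b).2; tauto

/-- union of two envs (with var from the first). -/
def Env.union (e₁ e₂ : Env 𝒜 ℱ V D) : Env 𝒜 ℱ V D :=
  ⟨fun A d => e₁.un A d ∨ e₂.un A d, fun f a b => e₁.bin f a b ∨ e₂.bin f a b, e₁.var⟩

theorem spand_congr {P P' Q Q' : Env 𝒜 ℱ V D → Prop}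
    (hP : ∀ u, P u ↔ P' u) (hQ : ∀ u, Q u ↔ Q' u) (e : Env 𝒜 ℱ V D) :
    spand P Q e ↔ spand P' Q' e := by
  unfold spand; constructor <;> rintro ⟨e₁, e₂, hs, h1, h2⟩ <;>
    exact ⟨e₁, e₂, hs, by rw [hP e₁] at *; exact h1, by rw [hQ e₂] at *; exact h2⟩

theorem spand_emp_left {P : Env 𝒜 ℱ V D → Prop} (e : Env 𝒜 ℱ V D) :
    spand emp' P e ↔ P e := by
  constructor
  · rintro ⟨e₁, e₂, ⟨hv1, hv2, hu, hb⟩, h1, h2⟩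
    have : e₂ = e := Env.ext'
      (fun A d => by have := (hu A d).1; have := (hu A d).2; have := h1.1 A d; tauto)
      (fun f a b => by have := (hb f a b).1; have := h1.2 f a b; tauto) hv2
    rwa [this] at h2
  · intro h
    exact ⟨⟨fun _ _ => False, fun _ _ _ => False, e.var⟩, e,
      ⟨rfl, rfl, fun A d => by simp, fun f a b => by simp⟩,
      ⟨fun _ _ => id, fun _ _ _ => id⟩, h⟩

theorem spand_emp_right {P : Env 𝒜 ℱ V D → Prop} (e : Env 𝒜 ℱ V D) :
    spand P emp' e ↔ P e := by
  unfold spand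
  constructor
  · rintro ⟨e₁, e₂, hs, h1, h2⟩
    exact (spand_emp_left e).1 ⟨e₂, e₁, hs.comm, h2, h1⟩
  · intro h
    obtain ⟨e₁, e₂, hs, h1, h2⟩ := (spand_emp_left e).2 h
    exact ⟨e₂, e₁, hs.comm, h2, h1⟩

theorem Env.split_assoc {e e₁ e₂ e₃ e₄ : Env 𝒜 ℱ V D}
    (h : e.Split e₁ e₂) (h' : e₂.Split e₃ e₄) :
    e.Split (Env.union e₁ e₃) e₄ ∧ (Env.union e₁ e₃).Split e₁ e₃ := by
  obtain ⟨hv1, hv2, hu, hb⟩ := h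
  obtain ⟨hv3, hv4, hu', hb'⟩ := h'
  refine ⟨⟨hv1, hv4.trans hv2, fun A d => ?_, fun f a b => ?_⟩,
    ⟨rfl, hv3.trans (hv2.trans hv1.symm), fun A d => ?_, fun f a b => ?_⟩⟩
  · have p1 := (hu A d).1; have p2 := (hu A d).2
    have q1 := (hu' A d).1; have q2 := (hu' A d).2
    simp only [Env.union]; constructor
    · tauto
    · tauto
  · have p1 := (hb f a b).1; have p2 := (hb f a b).2
    have q1 := (hb' f a b).1; have q2 := (hb' f a b).2
    simp only [Env.union]; constructor
    · tauto
    · tauto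
  · have p1 := (hu A d).1; have p2 := (hu A d).2
    have q1 := (hu' A d).1; have q2 := (hu' A d).2
    simp only [Env.union]; constructor
    · tauto
    · tauto
  · have p1 := (hb f a b).1; have p2 := (hb f a b).2
    have q1 := (hb' f a b).1; have q2 := (hb' f a b).2
    simp only [Env.union]; constructor
    · tauto
    · tauto

theorem spand_assoc {P Q R : Env 𝒜 ℱ V D → Prop} (e : Env 𝒜 ℱ V D) :
    spand P (spand Q R) e ↔ spand (spand P Q) R e := by
  constructor
  · rintro ⟨e₁, e₂, hs, h1, e₃, e₄, hs', h3, h4⟩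
    obtain ⟨hA, hB⟩ := Env.split_assoc hs hs'
    exact ⟨_, _, hA, ⟨_, _, hB, h1, h3⟩, h4⟩
  · rintro ⟨e₁, e₂, hs, ⟨e₃, e₄, hs', h3, h4⟩, h2⟩
    obtain ⟨hA, hB⟩ := Env.split_assoc hs.comm hs'.comm
    exact ⟨_, _, hA.comm, h3, ⟨_, _, hB.comm, h4, h2⟩⟩

theorem spand_swap {P Q R : Env 𝒜 ℱ V D → Prop} (e : Env 𝒜 ℱ V D) :
    spand P (spand Q R) e ↔ spand Q (spand P R) e := by
  rw [spand_assoc, spand_assoc]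
  apply spand_congr _ (fun _ => Iff.rfl)
  intro u
  constructor <;> rintro ⟨e₁, e₂, hs, h1, h2⟩ <;> exact ⟨e₂, e₁, hs.comm, h2, h1⟩

/-- abbreviation for iterated spatial conjunction over a list of predicates -/
def FoldP (l : List (Env 𝒜 ℱ V D → Prop)) : Env 𝒜 ℱ V D → Prop :=
  l.foldr spand emp'

theorem foldP_congr : ∀ {l₁ l₂ : List (Env 𝒜 ℱ V D → Prop)}, l₁.length = l₂.length →
    (∀ i : ℕ, ∀ h₁ : i < l₁.length, ∀ h₂ : i < l₂.length, ∀ u, l₁[i] u ↔ l₂[i] u) →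
    ∀ e, FoldP l₁ e ↔ FoldP l₂ e
  | [], [], _, _, e => Iff.rfl
  | p :: l₁, q :: l₂, hl, h, e => by
    simp only [FoldP, List.foldr_cons]
    exact spand_congr (h 0 (by simp) (by simp))
      (foldP_congr (by simpa using hl)
        (fun i h₁ h₂ u => h (i+1) (by simpa using h₁) (by simpa using h₂) u)) e
  | [], _ :: _, hl, _, _ => by simp at hl
  | _ :: _, [], hl, _, _ => by simp at hl

theorem foldP_perm {l₁ l₂ : List (Env 𝒜 ℱ V D → Prop)} (h : l₁.Perm l₂) :
    ∀ e, FoldP l₁ e ↔ FoldP l₂ e := by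
  induction h with
  | nil => exact fun _ => Iff.rfl
  | cons x _ ih =>
      intro e
      exact spand_congr (fun _ => Iff.rfl) (fun u => ih u) e
  | swap x y l =>
      intro e
      exact spand_swap e
  | trans _ _ ih₁ ih₂ => intro e; exact (ih₁ e).trans (ih₂ e)

theorem foldP_append (l₁ l₂ : List (Env 𝒜 ℱ V D → Prop)) (e : Env 𝒜 ℱ V D) :
    FoldP (l₁ ++ l₂) e ↔ spand (FoldP l₁) (FoldP l₂) e := by
  induction l₁ generalizing e with
  | nil => simpa [FoldP] using (spand_emp_left e).symm
  | cons p l ih =>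
      simp only [FoldP, List.foldr_cons, List.cons_append] at *
      rw [spand_congr (fun _ => Iff.rfl) (fun u => ih u) e, spand_assoc]

end AuxGeneric


section AuxBridge
set_option linter.unusedSectionVars false
variable {𝒜 ℱ : Type} [Fintype 𝒜] [DecidableEq 𝒜] [Fintype ℱ] [DecidableEq ℱ]
  {n m : ℕ} {D : Type}

theorem mem_atomsOn {V : Type} [Fintype V] [DecidableEq V] {xs : Finset V}
    {a : Atom 𝒜 ℱ V} : a ∈ atomsOn 𝒜 ℱ xs ↔ a.varset ⊆ xs := by
  simp [atomsOn, List.mem_filter, Finset.mem_toList]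

theorem mem_extAtoms {V : Type} [Fintype V] [DecidableEq V] {xs : Finset V} {x : V}
    {a : Atom 𝒜 ℱ V} : a ∈ extAtoms 𝒜 ℱ xs x ↔ isExtAtom xs x a = true := by
  simp [extAtoms, List.mem_filter, Finset.mem_toList]

theorem mem_extSigns {V : Type} [Fintype V] [DecidableEq V] {xs : Finset V} {x : V}
    {τ : Atom 𝒜 ℱ V → Bool} : τ ∈ extSigns 𝒜 ℱ xs x ↔ extSignB xs x τ = true := by
  simp [extSigns, List.mem_filter, Finset.mem_toList]

theorem nodup_extSigns {V : Type} [Fintype V] [DecidableEq V] {xs : Finset V} {x : V} :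
    (extSigns 𝒜 ℱ xs x).Nodup :=
  (Finset.nodup_toList _).filter _

theorem isExtAtom_iff {V : Type} [Fintype V] [DecidableEq V] {xs : Finset V} {x : V}
    {a : Atom 𝒜 ℱ V} : isExtAtom xs x a = true ↔ a.varset ⊆ insert x xs ∧ x ∈ a.varset := by
  simp [isExtAtom]

theorem listConj_sat {V : Type} [DecidableEq V] (l : List (Fml 𝒜 ℱ V)) (u : Env 𝒜 ℱ V D) :
    (listConj l).Sat u ↔ ∀ F ∈ l, F.Sat u := by
  induction l with
  | nil => simp [listConj, Fml.Sat]
  | cons F l ih =>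
      simp only [listConj, List.foldr_cons] at *
      rw [show (Fml.and F (l.foldr Fml.and (Fml.not Fml.fls))).Sat u =
        (F.Sat u ∧ (l.foldr Fml.and (Fml.not Fml.fls)).Sat u) from rfl, ih]
      simp

theorem signedConj_sat {V : Type} [DecidableEq V] (l : List (Atom 𝒜 ℱ V))
    (σ : Atom 𝒜 ℱ V → Bool) (u : Env 𝒜 ℱ V D) :
    (signedConj l σ).Sat u ↔ ∀ a ∈ l, (a.toFml.Sat u ↔ σ a = true) := by
  rw [signedConj, listConj_sat]
  constructor
  · intro h a ha
    have := h _ (List.mem_map_of_mem ha)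
    cases hσ : σ a <;> simp [hσ] at this <;> simp [this, Fml.Sat] at *
    exact this
  · intro h F hF
    obtain ⟨a, ha, rfl⟩ := List.mem_map.1 hF
    have := h a ha
    cases hσ : σ a <;> simp [hσ] at this ⊢ <;> simp [Fml.Sat, this]

theorem markEnv_var (e : Env 𝒜 ℱ (VV n m) D) (mk : Finset (Fin 2)) :
    (markEnv e mk).var = e.var := rfl

theorem atom_sat_iff (e : Env 𝒜 ℱ (VV n m) D) {mk : Finset (Fin 2)}
    (a : Atom 𝒜 ℱ (VV n m)) (ρ : VV n m → D) (u : Env 𝒜 ℱ (VV n m) D)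
    (hu : u.un = e.un) (hb : u.bin = e.bin) (hv : u.var = ρ) :
    a.toFml.Sat u ↔ a.holdsAt (markEnv e mk) ρ := by
  cases a <;> simp [Atom.toFml, Fml.Sat, Atom.holdsAt, markEnv, hu, hb, hv]

theorem gccatFml_sat_iff {e : Env 𝒜 ℱ (VV n m) D} {mk : Finset (Fin 2)}
    {σ : Atom 𝒜 ℱ (VV n m) → Bool} :
    (gccatFml (XS n m) σ).Sat e ↔ gccatTruth (markEnv e mk) σ := by
  rw [gccatFml, signedConj_sat, gccatTruth]
  simp only [markEnv_var]
  constructor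
  · intro h a ha
    rw [← atom_sat_iff e a e.var e rfl rfl rfl]
    exact h a (mem_atomsOn.2 ha)
  · intro h a ha
    rw [atom_sat_iff e a e.var e rfl rfl rfl]
    exact h a (mem_atomsOn.1 ha)

theorem extFml_sat_iff {e : Env 𝒜 ℱ (VV n m) D} {mk : Finset (Fin 2)}
    {τ : Atom 𝒜 ℱ (VV n m) → Bool} {d : D} :
    (extFml (XS n m) none τ).Sat (e.updVar none d) ↔ extTruth (markEnv e mk) d τ := by
  rw [extFml, signedConj_sat, extTruth]
  simp only [markEnv_var]
  constructor
  · intro h a ha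
    rw [← atom_sat_iff e a (Function.update e.var none d) (e.updVar none d) rfl rfl rfl]
    exact h a (mem_extAtoms.2 ha)
  · intro h a ha
    rw [atom_sat_iff e a (Function.update e.var none d) (e.updVar none d) rfl rfl rfl]
    exact h a (mem_extAtoms.1 ha)

theorem extSignB_iff {V : Type} [Fintype V] [DecidableEq V] {xs : Finset V} {x : V}
    {τ : Atom 𝒜 ℱ V → Bool} :
    extSignB xs x τ = true ↔
      τ (.eq x x) = true ∧ (∀ v ∈ xs, τ (.eq x v) = false ∧ τ (.eq v x) = false) ∧
      (∀ a, isExtAtom xs x a = false → τ a = false) := by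
  simp only [extSignB, Bool.and_eq_true, List.all_eq_true, Finset.mem_toList,
    Bool.not_eq_true', Bool.or_eq_true, Bool.not_eq_true]
  constructor
  · rintro ⟨⟨h1, h2⟩, h3⟩
    refine ⟨h1, fun v hv => h2 v hv, fun a ha => ?_⟩
    rcases h3 a (by simp) with h | h
    · rw [ha] at h; exact absurd h (by simp)
    · exact h
  · rintro ⟨h1, h2, h3⟩
    refine ⟨⟨h1, fun v hv => h2 v hv⟩, fun a _ => ?_⟩
    cases ha : isExtAtom xs x a
    · exact Or.inr (h3 a ha)
    · exact Or.inl rfl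

theorem gccatSignB_eq {V : Type} [Fintype V] [DecidableEq V] {xs : Finset V}
    {σ : Atom 𝒜 ℱ V → Bool} (h : gccatSignB xs σ = true) :
    ∀ v ∈ xs, ∀ w ∈ xs, σ (.eq v w) = decide (v = w) := by
  intro v hv w hw
  simp only [gccatSignB, Bool.and_eq_true, List.all_eq_true, Finset.mem_toList] at h
  simpa using h.1 v hv w hw

theorem mem_XS {i : Fin n} : (xvar i : VV n m) ∈ XS n m := by
  simp [XS, xvar]

theorem mem_XS_iff {v : VV n m} : v ∈ XS n m ↔ ∃ i : Fin n, v = xvar i := by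
  simp [XS, eq_comm]

end AuxBridge


section AuxSem
set_option linter.unusedSectionVars false
variable {𝒜 ℱ : Type} [Fintype 𝒜] [DecidableEq 𝒜] [Fintype ℱ] [DecidableEq ℱ]
  {n m : ℕ} {D : Type}

theorem holdsAt_eq_indep {a : Atom 𝒜 ℱ (VV n m)} (he : a.isEq = true)
    (u u' : Env (𝒜 ⊕ Fin 2) ℱ (VV n m) D) (ρ : VV n m → D) :
    a.holdsAt u ρ ↔ a.holdsAt u' ρ := by
  cases a <;> simp [Atom.holdsAt, Atom.isEq] at he ⊢

theorem holdsAt_split {u u₁ u₂ : Env (𝒜 ⊕ Fin 2) ℱ (VV n m) D} (hs : u.Split u₁ u₂)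
    {a : Atom 𝒜 ℱ (VV n m)} (hne : a.isEq = false) (ρ : VV n m → D) :
    (a.holdsAt u ρ ↔ a.holdsAt u₁ ρ ∨ a.holdsAt u₂ ρ) ∧
      ¬(a.holdsAt u₁ ρ ∧ a.holdsAt u₂ ρ) := by
  obtain ⟨hv1, hv2, hu, hb⟩ := hs
  cases a with
  | un A v => exact hu (Sum.inl A) (ρ v)
  | bin f v w => exact hb f (ρ v) (ρ w)
  | eq v w => simp [Atom.isEq] at hne

theorem update_var_eq {u u' : Env (𝒜 ⊕ Fin 2) ℱ (VV n m) D} (h : u.var = u'.var) (d : D) :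
    Function.update u.var none d = Function.update u'.var none d := by rw [h]

theorem emptyExtSign_eq_false {a : Atom 𝒜 ℱ (VV n m)} (hne : a ≠ .eq none none) :
    (emptyExtSign a : Bool) = false := by
  simp [emptyExtSign, hne]

theorem not_holds_of_allEmpty {u₁ : Env (𝒜 ⊕ Fin 2) ℱ (VV n m) D} {d : D}
    (h1 : allEmptyAt u₁ d) {a : Atom 𝒜 ℱ (VV n m)} (ha : isExtAtom (XS n m) none a = true)
    (hne : a.isEq = false) (ρ : VV n m → D) (hρ : ρ = Function.update u₁.var none d) :
    ¬ a.holdsAt u₁ ρ := by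
  intro hh
  have := (h1.1 a ha).1 (by rwa [hρ] at hh)
  rw [emptyExtSign_eq_false] at this
  · exact Bool.false_ne_true this
  · intro hEq; rw [hEq] at hne; simp [Atom.isEq] at hne

theorem guardAt_congr {u u' : Env (𝒜 ⊕ Fin 2) ℱ (VV n m) D} (h : u.var = u'.var) (d : D) :
    guardAt u d ↔ guardAt u' d := by simp [guardAt, h]

theorem extTruth_split_left {u u₁ u₂ : Env (𝒜 ⊕ Fin 2) ℱ (VV n m) D}
    (hs : u.Split u₁ u₂) {d : D} (h1 : allEmptyAt u₁ d) {τ : Atom 𝒜 ℱ (VV n m) → Bool} :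
    extTruth u d τ ↔ extTruth u₂ d τ := by
  have hv2 : Function.update u₂.var none d = Function.update u.var none d :=
    update_var_eq hs.2.1 d
  have hv1 : Function.update u₁.var none d = Function.update u.var none d :=
    update_var_eq hs.1 d
  unfold extTruth
  rw [hv2]
  apply forall_congr'; intro a
  apply imp_congr_right; intro ha
  cases he : a.isEq with
  | true => rw [holdsAt_eq_indep he u u₂]
  | false =>
      have hns := holdsAt_split hs (a := a) he (Function.update u.var none d)
      have hn1 := not_holds_of_allEmpty h1 ha he _ hv1.symm
      have heq : Atom.holdsAt u (Function.update u.var none d) a ↔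
          Atom.holdsAt u₂ (Function.update u.var none d) a := by
        rw [hns.1]; tauto
      rw [heq]

theorem markTruth_split_left {u u₁ u₂ : Env (𝒜 ⊕ Fin 2) ℱ (VV n m) D}
    (hs : u.Split u₁ u₂) {d : D} (h1 : markTruth u₁ d ∅) {mk : Finset (Fin 2)} :
    markTruth u d mk ↔ markTruth u₂ d mk := by
  unfold markTruth
  apply forall_congr'; intro q
  have hq := (hs.2.2.1 (Sum.inr q) d).1
  have h1q := h1 q
  simp only [Finset.notMem_empty, iff_false] at h1q
  rw [hq]
  tauto

theorem allEmptyAt_split {u u₁ u₂ : Env (𝒜 ⊕ Fin 2) ℱ (VV n m) D}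
    (hs : u.Split u₁ u₂) {d : D} (h1 : allEmptyAt u₁ d) (h2 : allEmptyAt u₂ d) :
    allEmptyAt u d := by
  have hv1 : Function.update u₁.var none d = Function.update u.var none d :=
    update_var_eq hs.1 d
  have hv2 : Function.update u₂.var none d = Function.update u.var none d :=
    update_var_eq hs.2.1 d
  constructor
  · intro a ha
    cases he : a.isEq with
    | true =>
        have := h2.1 a ha
        rwa [hv2, holdsAt_eq_indep he u₂ u] at this
    | false =>
        have hns := holdsAt_split hs (a := a) he (Function.update u.var none d)
        have hn1 := not_holds_of_allEmpty h1 ha he _ hv1.symm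
        have hn2 := not_holds_of_allEmpty h2 ha he _ hv2.symm
        rw [emptyExtSign_eq_false (by intro hEq; rw [hEq] at he; simp [Atom.isEq] at he)]
        simp only [Bool.false_eq_true, iff_false]
        intro hh
        rcases hns.1.1 hh with h' | h'
        · exact hn1 h'
        · exact hn2 h'
  · intro q
    have hq := (hs.2.2.1 (Sum.inr q) d).1
    have h1q := h1.2 q; have h2q := h2.2 q
    simp only [Finset.notMem_empty, iff_false] at h1q h2q ⊢
    rw [hq]; tauto

theorem ext_canon {u : Env (𝒜 ⊕ Fin 2) ℱ (VV n m) D} {d : D}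
    {τ₁ τ₂ : Atom 𝒜 ℱ (VV n m) → Bool}
    (h1 : extSignB (XS n m) none τ₁ = true) (h2 : extSignB (XS n m) none τ₂ = true)
    (e1 : extTruth u d τ₁) (e2 : extTruth u d τ₂) : τ₁ = τ₂ := by
  funext a
  cases ha : isExtAtom (XS n m) none a with
  | true =>
      have := (e1 a ha).symm.trans (e2 a ha)
      rcases Bool.dichotomy (τ₁ a) with h | h <;> rcases Bool.dichotomy (τ₂ a) with h' | h' <;>
        simp [h, h'] at this ⊢
  | false =>
      rw [(extSignB_iff.1 h1).2.2 a ha, (extSignB_iff.1 h2).2.2 a ha]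

theorem extTruth_guard {u : Env (𝒜 ⊕ Fin 2) ℱ (VV n m) D} {d : D}
    {τ : Atom 𝒜 ℱ (VV n m) → Bool} (hτ : extSignB (XS n m) none τ = true)
    (h : extTruth u d τ) : guardAt u d := by
  intro i
  have hext : isExtAtom (XS n m) none (Atom.eq none (xvar i) : Atom 𝒜 ℱ (VV n m)) = true := by
    rw [isExtAtom_iff]
    constructor
    · intro v hv
      simp [Atom.varset] at hv
      rcases hv with rfl | rfl
      · exact Finset.mem_insert_self _ _
      · exact Finset.mem_insert_of_mem mem_XS
    · simp [Atom.varset]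
  have := h _ hext
  have hτ' := (extSignB_iff.1 hτ).2.1 (xvar i) mem_XS
  rw [hτ'.1] at this
  simp only [Bool.false_eq_true, iff_false] at this
  intro hd
  apply this
  show Function.update u.var none d none = Function.update u.var none d (xvar i)
  rw [Function.update_self, Function.update_of_ne (by simp [xvar])]
  exact hd

end AuxSem


section AuxEnvOf
set_option linter.unusedSectionVars false
open scoped Classical
variable {𝒜 ℱ : Type} [Fintype 𝒜] [DecidableEq 𝒜] [Fintype ℱ] [DecidableEq ℱ]
  {n m : ℕ} {D : Type}

theorem extAtom_cases {a : Atom 𝒜 ℱ (VV n m)} (h : isExtAtom (XS n m) none a = true) :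
    (∃ A, a = .un A none) ∨ (∃ f, a = .bin f none none) ∨
    (∃ f i, a = .bin f none (xvar i)) ∨ (∃ f i, a = .bin f (xvar i) none) ∨
    a = .eq none none ∨ (∃ i, a = .eq none (xvar i)) ∨ (∃ i, a = .eq (xvar i) none) := by
  rw [isExtAtom_iff] at h
  obtain ⟨hsub, hmem⟩ := h
  cases a with
  | un A v =>
      simp only [Atom.varset, Finset.mem_singleton] at hmem
      subst hmem
      exact Or.inl ⟨A, rfl⟩
  | bin f v w =>
      simp only [Atom.varset, Finset.insert_subset_iff, Finset.singleton_subset_iff,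
        Finset.mem_insert, Finset.mem_singleton] at hsub hmem
      rcases hmem with rfl | rfl
      · rcases hsub.2 with h' | h'
        · exact Or.inr (Or.inl ⟨f, by rw [h']⟩)
        · obtain ⟨i, rfl⟩ := mem_XS_iff.1 h'
          exact Or.inr (Or.inr (Or.inl ⟨f, i, rfl⟩))
      · rcases hsub.1 with h' | h'
        · exact Or.inr (Or.inl ⟨f, by rw [h']⟩)
        · obtain ⟨i, rfl⟩ := mem_XS_iff.1 h'
          exact Or.inr (Or.inr (Or.inr (Or.inl ⟨f, i, rfl⟩)))
  | eq v w =>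
      simp only [Atom.varset, Finset.insert_subset_iff, Finset.singleton_subset_iff,
        Finset.mem_insert, Finset.mem_singleton] at hsub hmem
      rcases hmem with rfl | rfl
      · rcases hsub.2 with h' | h'
        · exact Or.inr (Or.inr (Or.inr (Or.inr (Or.inl (by rw [h'])))))
        · obtain ⟨i, rfl⟩ := mem_XS_iff.1 h'
          exact Or.inr (Or.inr (Or.inr (Or.inr (Or.inr (Or.inl ⟨i, rfl⟩)))))
      · rcases hsub.1 with h' | h'
        · exact Or.inr (Or.inr (Or.inr (Or.inr (Or.inl (by rw [h'])))))
        · obtain ⟨i, rfl⟩ := mem_XS_iff.1 h'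
          exact Or.inr (Or.inr (Or.inr (Or.inr (Or.inr (Or.inr ⟨i, rfl⟩)))))

variable (e : Env 𝒜 ℱ (VV n m) D) (mk : Finset (Fin 2))

/-- the marked environment restricted to the cells owned by elements satisfying `P`
(a binary cell is owned by its first argument if that is outside the tuple,
otherwise by its second argument). -/
noncomputable def envOf (P : D → Prop) : Env (𝒜 ⊕ Fin 2) ℱ (VV n m) D where
  un := fun A d => (markEnv e mk).un A d ∧ P d
  bin := fun f d₁ d₂ => (markEnv e mk).bin f d₁ d₂ ∧
    P (if guardAt (markEnv e mk) d₁ then d₁ else d₂)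
  var := e.var

theorem envOf_var (P : D → Prop) : (envOf e mk P).var = e.var := rfl

theorem envOf_congr {P Q : D → Prop} (h : ∀ d, P d ↔ Q d) : envOf e mk P = envOf e mk Q :=
  Env.ext' (fun A d => by simp only [envOf]; rw [h d])
    (fun f a b => by simp only [envOf]; rw [h _]) rfl

theorem envOf_true : envOf e mk (fun _ => True) = markEnv e mk :=
  Env.ext' (fun A d => by simp [envOf]) (fun f a b => by simp [envOf, markEnv]) rfl

theorem envOf_emp {P : D → Prop} (h : ∀ d, ¬ P d) : emp' (envOf e mk P) :=
  ⟨fun A d hh => h _ hh.2, fun f a b hh => h _ hh.2⟩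

theorem envOf_split {P P₁ P₂ : D → Prop}
    (h : ∀ d, (P d ↔ P₁ d ∨ P₂ d) ∧ ¬(P₁ d ∧ P₂ d)) :
    (envOf e mk P).Split (envOf e mk P₁) (envOf e mk P₂) := by
  refine ⟨rfl, rfl, fun A d => ?_, fun f a b => ?_⟩
  · have := (h d).1; have := (h d).2
    simp only [envOf]; constructor
    · tauto
    · tauto
  · have := (h (if guardAt (markEnv e mk) a then a else b)).1
    have := (h (if guardAt (markEnv e mk) a then a else b)).2
    simp only [envOf]; constructor
    · tauto
    · tauto

theorem guardAt_envOf (P : D → Prop) (d : D) :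
    guardAt (envOf e mk P) d ↔ guardAt (markEnv e mk) d := Iff.rfl

theorem not_guard_tuple (i : Fin n) : ¬ guardAt (markEnv e mk) (e.var (xvar i)) := by
  intro h; exact h i rfl

theorem markEnv_un_inr (q : Fin 2) (d : D) :
    (markEnv e mk).un (Sum.inr q) d ↔ q ∈ mk ∧ guardAt (markEnv e mk) d := by
  simp [markEnv, guardAt, markEnv_var]

/-- tuple distinctness hypothesis -/
def TupEq : Prop := ∀ v ∈ XS n m, ∀ w ∈ XS n m, (e.var v = e.var w ↔ v = w)

theorem gccat_empty_envOf {P : D → Prop} (Heq : TupEq e)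
    (hP : ∀ d, P d → guardAt (markEnv e mk) d) :
    gccatTruth (envOf e mk P) emptyGSign := by
  intro a ha
  cases a with
  | un A v =>
      simp only [Atom.varset, Finset.singleton_subset_iff] at ha
      obtain ⟨i, rfl⟩ := mem_XS_iff.1 ha
      show (envOf e mk P).un (Sum.inl A) (e.var (xvar i)) ↔ _
      simp only [envOf, emptyGSign]
      constructor
      · intro hh; exact absurd (hP _ hh.2) (not_guard_tuple e mk i)
      · intro hh; simp at hh
  | bin f v w =>
      simp only [Atom.varset, Finset.insert_subset_iff, Finset.singleton_subset_iff] at ha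
      obtain ⟨i, rfl⟩ := mem_XS_iff.1 ha.1
      obtain ⟨j, rfl⟩ := mem_XS_iff.1 ha.2
      show (envOf e mk P).bin f (e.var (xvar i)) (e.var (xvar j)) ↔ _
      simp only [envOf, emptyGSign, if_neg (not_guard_tuple e mk i)]
      constructor
      · intro hh; exact absurd (hP _ hh.2) (not_guard_tuple e mk j)
      · intro hh; simp at hh
  | eq v w =>
      simp only [Atom.varset, Finset.insert_subset_iff, Finset.singleton_subset_iff] at ha
      show e.var v = e.var w ↔ _
      rw [Heq v ha.1 w ha.2]
      simp [emptyGSign]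

theorem allEmpty_envOf {P : D → Prop} {d : D} (hg : guardAt (markEnv e mk) d)
    (hd : ¬ P d) :
    allEmptyAt (envOf e mk P) d := by
  have hρn : Function.update (envOf e mk P).var none d none = d := Function.update_self _ _ _
  have hρx : ∀ i : Fin n, Function.update (envOf e mk P).var none d (xvar i) = e.var (xvar i) :=
    fun i => Function.update_of_ne (by simp [xvar]) _ _
  constructor
  · intro a ha
    rcases extAtom_cases ha with ⟨A, rfl⟩ | ⟨f, rfl⟩ | ⟨f, i, rfl⟩ | ⟨f, i, rfl⟩ |
      rfl | ⟨i, rfl⟩ | ⟨i, rfl⟩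
    · show (envOf e mk P).un (Sum.inl A) _ ↔ _
      rw [hρn]
      simp only [envOf, emptyExtSign]
      constructor
      · intro hh; exact absurd hh.2 hd
      · intro hh; simp at hh
    · show (envOf e mk P).bin f _ _ ↔ _
      rw [hρn]
      simp only [envOf, emptyExtSign, if_pos hg]
      constructor
      · intro hh; exact absurd hh.2 hd
      · intro hh; simp at hh
    · show (envOf e mk P).bin f _ _ ↔ _
      rw [hρn, hρx i]
      simp only [envOf, emptyExtSign, if_pos hg]
      constructor
      · intro hh; exact absurd hh.2 hd
      · intro hh; simp at hh
    · show (envOf e mk P).bin f _ _ ↔ _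
      rw [hρn, hρx i]
      simp only [envOf, emptyExtSign, if_neg (not_guard_tuple e mk i)]
      constructor
      · intro hh; exact absurd hh.2 hd
      · intro hh; simp at hh
    · show _ = _ ↔ _
      simp [emptyExtSign]
    · show _ = _ ↔ _
      rw [hρn, hρx i]
      simp only [emptyExtSign]
      constructor
      · intro hh; exact absurd hh (hg i)
      · intro hh; simp [xvar] at hh
    · show _ = _ ↔ _
      rw [hρn, hρx i]
      simp only [emptyExtSign]
      constructor
      · intro hh; exact absurd hh.symm (hg i)
      · intro hh; simp [xvar] at hh
  · intro q
    simp only [envOf, Finset.notMem_empty, iff_false]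
    intro hh
    exact hd hh.2

theorem markTruth_envOf {P : D → Prop} {d : D} (hg : guardAt (markEnv e mk) d) (hd : P d) :
    markTruth (envOf e mk P) d mk := by
  intro q
  show (markEnv e mk).un (Sum.inr q) d ∧ P d ↔ _
  rw [markEnv_un_inr]
  exact ⟨fun hh => hh.1.1, fun hh => ⟨⟨hh, hg⟩, hd⟩⟩

theorem extTruth_envOf {P : D → Prop} {d : D} {τ : Atom 𝒜 ℱ (VV n m) → Bool}
    (hg : guardAt (markEnv e mk) d) (hd : P d) (hT : extTruth (markEnv e mk) d τ) :
    extTruth (envOf e mk P) d τ := by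
  have hvv : Function.update (envOf e mk P).var none d =
      Function.update (markEnv e mk).var none d := rfl
  have hρn : Function.update (markEnv e mk).var none d none = d := Function.update_self _ _ _
  have hρx : ∀ i : Fin n, Function.update (markEnv e mk).var none d (xvar i) = e.var (xvar i) :=
    fun i => Function.update_of_ne (by simp [xvar]) _ _
  intro a ha
  rw [show (Atom.holdsAt (envOf e mk P) (Function.update (envOf e mk P).var none d) a) =
    (Atom.holdsAt (envOf e mk P) (Function.update (markEnv e mk).var none d) a) from rfl]
  have hE := hT a ha
  rcases extAtom_cases ha with ⟨A, rfl⟩ | ⟨f, rfl⟩ | ⟨f, i, rfl⟩ | ⟨f, i, rfl⟩ |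
    rfl | ⟨i, rfl⟩ | ⟨i, rfl⟩
  · rw [← hE]
    show (envOf e mk P).un (Sum.inl A) _ ↔ (markEnv e mk).un (Sum.inl A) _
    rw [hρn]
    simp only [envOf]
    exact ⟨fun hh => hh.1, fun hh => ⟨hh, hd⟩⟩
  · rw [← hE]
    show (envOf e mk P).bin f _ _ ↔ (markEnv e mk).bin f _ _
    rw [hρn]
    simp only [envOf, if_pos hg]
    exact ⟨fun hh => hh.1, fun hh => ⟨hh, hd⟩⟩
  · rw [← hE]
    show (envOf e mk P).bin f _ _ ↔ (markEnv e mk).bin f _ _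
    rw [hρn, hρx i]
    simp only [envOf, if_pos hg]
    exact ⟨fun hh => hh.1, fun hh => ⟨hh, hd⟩⟩
  · rw [← hE]
    show (envOf e mk P).bin f _ _ ↔ (markEnv e mk).bin f _ _
    rw [hρn, hρx i]
    simp only [envOf, if_neg (not_guard_tuple e mk i), if_pos hg]
    exact ⟨fun hh => hh.1, fun hh => ⟨hh, hd⟩⟩
  · exact hE
  · exact hE
  · exact hE

end AuxEnvOf


section AuxBlocks
set_option linter.unusedSectionVars false
open scoped Classical
variable {𝒜 ℱ : Type} [Fintype 𝒜] [DecidableEq 𝒜] [Fintype ℱ] [DecidableEq ℱ]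
  {n m : ℕ} {D : Type} [Finite D]
variable (e : Env 𝒜 ℱ (VV n m) D) (mk : Finset (Fin 2))

theorem sem_kstr {σ : Atom 𝒜 ℱ (VV n m) → Bool} (hσ : gccatTruth (markEnv e mk) σ) :
    Blk.sem (Blk.kstr σ) (envOf e mk (fun d => ¬ guardAt (markEnv e mk) d)) := by
  constructor
  · intro a ha
    have hE := hσ a ha
    cases a with
    | un A v =>
        simp only [Atom.varset, Finset.singleton_subset_iff] at ha
        obtain ⟨i, rfl⟩ := mem_XS_iff.1 ha
        rw [← hE]
        show (envOf e mk _).un (Sum.inl A) (e.var (xvar i)) ↔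
          (markEnv e mk).un (Sum.inl A) (e.var (xvar i))
        simp only [envOf]
        exact ⟨fun hh => hh.1, fun hh => ⟨hh, not_guard_tuple e mk i⟩⟩
    | bin f v w =>
        simp only [Atom.varset, Finset.insert_subset_iff, Finset.singleton_subset_iff] at ha
        obtain ⟨i, rfl⟩ := mem_XS_iff.1 ha.1
        obtain ⟨j, rfl⟩ := mem_XS_iff.1 ha.2
        rw [← hE]
        show (envOf e mk _).bin f (e.var (xvar i)) (e.var (xvar j)) ↔
          (markEnv e mk).bin f (e.var (xvar i)) (e.var (xvar j))
        simp only [envOf, if_neg (not_guard_tuple e mk i)]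
        exact ⟨fun hh => hh.1, fun hh => ⟨hh, not_guard_tuple e mk j⟩⟩
    | eq v w => exact hE
  · intro d hg
    exact allEmpty_envOf e mk hg (fun hh => hh hg)

theorem sem_empe (Heq : TupEq e) :
    Blk.sem Blk.empe (envOf e mk (fun _ => False)) := by
  constructor
  · exact gccat_empty_envOf e mk Heq (fun d h => h.elim)
  · intro d hg
    exact allEmpty_envOf e mk hg (fun h => h)

theorem sem_oneNum (Heq : TupEq e) {τ : Atom 𝒜 ℱ (VV n m) → Bool} {S : Set D}
    (hmk : mk.Nonempty)
    (hSg : ∀ d ∈ S, guardAt (markEnv e mk) d)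
    (hST : ∀ d ∈ S, extTruth (markEnv e mk) d τ)
    (hcard : S.ncard = 1) :
    Blk.sem (Blk.oneNum mk τ) (envOf e mk (· ∈ S)) := by
  refine ⟨⟨gccat_empty_envOf e mk Heq hSg, fun d hg => ?_⟩, ?_⟩
  · by_cases hd : d ∈ S
    · exact Or.inl ⟨extTruth_envOf e mk hg hd (hST d hd), markTruth_envOf e mk hg hd⟩
    · exact Or.inr (allEmpty_envOf e mk hg hd)
  · have hset : {d : D | guardAt (envOf e mk (· ∈ S)) d ∧
        extTruth (envOf e mk (· ∈ S)) d τ ∧ markTruth (envOf e mk (· ∈ S)) d mk} = S := by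
      ext d
      simp only [Set.mem_setOf_eq]
      constructor
      · rintro ⟨hg, hT, hM⟩
        obtain ⟨q₀, hq₀⟩ := hmk
        have := (hM q₀).2 hq₀
        exact this.2
      · intro hd
        have hg := hSg d hd
        exact ⟨hg, extTruth_envOf e mk hg hd (hST d hd), markTruth_envOf e mk hg hd⟩
    rw [hset, hcard]

theorem sem_anyNum (Heq : TupEq e) {τ : Atom 𝒜 ℱ (VV n m) → Bool} {S : Set D}
    (hSg : ∀ d ∈ S, guardAt (markEnv e mk) d)
    (hST : ∀ d ∈ S, extTruth (markEnv e mk) d τ) :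
    Blk.sem (Blk.anyNum mk τ) (envOf e mk (· ∈ S)) := by
  refine ⟨gccat_empty_envOf e mk Heq hSg, fun d hg => ?_⟩
  by_cases hd : d ∈ S
  · exact Or.inl ⟨extTruth_envOf e mk hg hd (hST d hd), markTruth_envOf e mk hg hd⟩
  · exact Or.inr (allEmpty_envOf e mk hg hd)

/-- list version of `xstrBlocks` -/
def blkList (τ : Atom 𝒜 ℱ (VV n m) → Bool) : CQ → List (Blk 𝒜 ℱ n m)
  | .exact k => List.replicate k (Blk.oneNum mk τ) ++ [Blk.empe]
  | .atLeast k => List.replicate k (Blk.oneNum mk τ) ++ [Blk.empe, Blk.anyNum mk τ]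

theorem fold_exact (Heq : TupEq e) (hmk : mk.Nonempty) {τ : Atom 𝒜 ℱ (VV n m) → Bool} :
    ∀ (k : ℕ) (S : Set D), (∀ d ∈ S, guardAt (markEnv e mk) d) →
    (∀ d ∈ S, extTruth (markEnv e mk) d τ) → S.ncard = k →
    FoldP ((List.replicate k (Blk.oneNum mk τ) ++ [Blk.empe]).map Blk.sem)
      (envOf e mk (· ∈ S)) := by
  intro k
  induction k with
  | zero =>
      intro S hSg hST hcard
      rw [Set.ncard_eq_zero (Set.toFinite S)] at hcard
      show FoldP [Blk.sem Blk.empe] _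
      rw [show FoldP [Blk.sem Blk.empe] = spand (Blk.sem Blk.empe) emp' from rfl]
      rw [spand_emp_right]
      rw [envOf_congr e mk (Q := fun _ => False) (by simp [hcard])]
      exact sem_empe e mk Heq
  | succ k ih =>
      intro S hSg hST hcard
      have hne : S.Nonempty := Set.nonempty_of_ncard_ne_zero (by omega)
      obtain ⟨d₀, hd₀⟩ := hne
      rw [List.replicate_succ, List.cons_append, List.map_cons]
      refine ⟨envOf e mk (· ∈ ({d₀} : Set D)), envOf e mk (· ∈ (S \ {d₀} : Set D)),
        envOf_split e mk (fun d => ⟨?_, ?_⟩), ?_, ?_⟩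
      · simp only [Set.mem_singleton_iff, Set.mem_diff]
        constructor
        · intro hd
          by_cases hdd : d = d₀
          · exact Or.inl hdd
          · exact Or.inr ⟨hd, hdd⟩
        · rintro (rfl | ⟨hd, _⟩)
          · exact hd₀
          · exact hd
      · simp only [Set.mem_singleton_iff, Set.mem_diff]
        tauto
      · exact sem_oneNum e mk Heq hmk
          (fun d hd => by rw [Set.mem_singleton_iff] at hd; exact hd ▸ hSg d₀ hd₀)
          (fun d hd => by rw [Set.mem_singleton_iff] at hd; exact hd ▸ hST d₀ hd₀)
          (Set.ncard_singleton d₀)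
      · refine ih (S \ {d₀}) (fun d hd => hSg d hd.1) (fun d hd => hST d hd.1) ?_
        rw [Set.ncard_diff_singleton_of_mem hd₀, hcard]
        omega

theorem fold_blkList (Heq : TupEq e) (hmk : mk.Nonempty) {τ : Atom 𝒜 ℱ (VV n m) → Bool}
    (q : CQ) (S : Set D) (hSg : ∀ d ∈ S, guardAt (markEnv e mk) d)
    (hST : ∀ d ∈ S, extTruth (markEnv e mk) d τ) (hq : q.sat S.ncard) :
    FoldP ((blkList mk τ q).map Blk.sem) (envOf e mk (· ∈ S)) := by
  cases q with
  | exact k => exact fold_exact e mk Heq hmk k S hSg hST hq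
  | atLeast k =>
      obtain ⟨S', hS'sub, hS'card⟩ := Set.exists_subset_card_eq (hq : k ≤ S.ncard)
      show FoldP ((List.replicate k (Blk.oneNum mk τ) ++ [Blk.empe, Blk.anyNum mk τ]).map
        Blk.sem) _
      have hsplit : (List.replicate k (Blk.oneNum mk τ) ++ [Blk.empe, Blk.anyNum mk τ]) =
          (List.replicate k (Blk.oneNum mk τ) ++ [Blk.empe]) ++ [Blk.anyNum mk τ] := by
        simp
      rw [hsplit, List.map_append, foldP_append]
      refine ⟨envOf e mk (· ∈ S'), envOf e mk (· ∈ (S \ S' : Set D)),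
        envOf_split e mk (fun d => ⟨?_, ?_⟩), ?_, ?_⟩
      · simp only [Set.mem_diff]
        constructor
        · intro hd
          by_cases hdd : d ∈ S'
          · exact Or.inl hdd
          · exact Or.inr ⟨hd, hdd⟩
        · rintro (hd | ⟨hd, _⟩)
          · exact hS'sub hd
          · exact hd
      · simp only [Set.mem_diff]; tauto
      · exact fold_exact e mk Heq hmk k S' (fun d hd => hSg d (hS'sub hd))
          (fun d hd => hST d (hS'sub hd)) hS'card
      · show FoldP [Blk.sem (Blk.anyNum mk τ)] _
        rw [show FoldP [Blk.sem (Blk.anyNum mk τ)] = spand (Blk.sem (Blk.anyNum mk τ)) emp'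
          from rfl, spand_emp_right]
        exact sem_anyNum e mk Heq (fun d hd => hSg d hd.1) (fun d hd => hST d hd.1)

theorem fold_groups (Heq : TupEq e) (hmk : mk.Nonempty) (γ : (Atom 𝒜 ℱ (VV n m) → Bool) → CQ) :
    ∀ (T : List (Atom 𝒜 ℱ (VV n m) → Bool)), T.Nodup →
    (∀ τ ∈ T, extSignB (XS n m) none τ = true) →
    (∀ τ ∈ T, (γ τ).sat {d : D | guardAt (markEnv e mk) d ∧
      extTruth (markEnv e mk) d τ}.ncard) →
    FoldP ((T.flatMap (fun τ => blkList mk τ (γ τ))).map Blk.sem)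
      (envOf e mk (fun d => guardAt (markEnv e mk) d ∧
        ∃ τ ∈ T, extTruth (markEnv e mk) d τ)) := by
  intro T
  induction T with
  | nil =>
      intro _ _ _
      show FoldP [] _
      exact envOf_emp e mk (fun d => by simp)
  | cons τ T ih =>
      intro hnd hsign hsat
      rw [List.flatMap_cons, List.map_append, foldP_append]
      refine ⟨envOf e mk (· ∈ {d : D | guardAt (markEnv e mk) d ∧
          extTruth (markEnv e mk) d τ}),
        envOf e mk (fun d => guardAt (markEnv e mk) d ∧
          ∃ τ' ∈ T, extTruth (markEnv e mk) d τ'),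
        envOf_split e mk (fun d => ⟨?_, ?_⟩), ?_, ?_⟩
      · simp only [Set.mem_setOf_eq, List.mem_cons]
        constructor
        · rintro ⟨hg, τ', (rfl | hτ'), hT⟩
          · exact Or.inl ⟨hg, hT⟩
          · exact Or.inr ⟨hg, τ', hτ', hT⟩
        · rintro (⟨hg, hT⟩ | ⟨hg, τ', hτ', hT⟩)
          · exact ⟨hg, τ, Or.inl rfl, hT⟩
          · exact ⟨hg, τ', Or.inr hτ', hT⟩
      · simp only [Set.mem_setOf_eq]
        rintro ⟨⟨hg, hT⟩, ⟨_, τ', hτ', hT'⟩⟩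
        have := ext_canon (hsign τ (List.mem_cons_self))
          (hsign τ' (List.mem_cons_of_mem _ hτ')) hT hT'
        subst this
        exact (List.nodup_cons.1 hnd).1 hτ'
      · exact fold_blkList e mk Heq hmk (γ τ) _ (fun d hd => hd.1) (fun d hd => hd.2)
          (hsat τ (List.mem_cons_self))
      · exact ih (List.nodup_cons.1 hnd).2 (fun τ' h => hsign τ' (List.mem_cons_of_mem _ h))
          (fun τ' h => hsat τ' (List.mem_cons_of_mem _ h))

end AuxBlocks


section AuxChar
set_option linter.unusedSectionVars false
open scoped Classical
variable {𝒜 ℱ : Type} [Fintype 𝒜] [DecidableEq 𝒜] [Fintype ℱ] [DecidableEq ℱ]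
  {n m : ℕ} {D : Type} [Finite D]
variable (e : Env 𝒜 ℱ (VV n m) D) (mk : Finset (Fin 2))

theorem heq_of_gccat {σ : Atom 𝒜 ℱ (VV n m) → Bool} (hc : gccatSignB (XS n m) σ = true)
    (hσ : gccatTruth (markEnv e mk) σ) : TupEq e := by
  intro v hv w hw
  have h := hσ (.eq v w) (by
    simp only [Atom.varset, Finset.insert_subset_iff, Finset.singleton_subset_iff]
    exact ⟨hv, hw⟩)
  rw [gccatSignB_eq hc v hv w hw] at h
  exact h.trans decide_eq_true_iff

/-- the canonical extension type of an element -/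
noncomputable def tauOf (d : D) : Atom 𝒜 ℱ (VV n m) → Bool := fun a =>
  decide (isExtAtom (XS n m) none a = true ∧
    a.holdsAt (markEnv e mk) (Function.update e.var none d))

theorem extTruth_tauOf (d : D) : extTruth (markEnv e mk) d (tauOf e mk d) := by
  intro a ha
  simp [tauOf, ha, markEnv_var]

theorem extSignB_tauOf {d : D} (hg : guardAt (markEnv e mk) d) :
    extSignB (XS n m) none (tauOf e mk d) = true := by
  have hρn : Function.update e.var none d none = d := Function.update_self _ _ _
  have hρx : ∀ i : Fin n, Function.update e.var none d (xvar i) = e.var (xvar i) :=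
    fun i => Function.update_of_ne (by simp [xvar]) _ _
  rw [extSignB_iff]
  refine ⟨?_, ?_, ?_⟩
  · apply decide_eq_true
    constructor
    · rw [isExtAtom_iff]
      constructor
      · intro v hv
        simp only [Atom.varset, Finset.mem_insert, Finset.mem_singleton] at hv
        rcases hv with rfl | rfl <;> exact Finset.mem_insert_self _ _
      · simp [Atom.varset]
    · show Function.update e.var none d none = Function.update e.var none d none
      rfl
  · intro v hv
    obtain ⟨i, rfl⟩ := mem_XS_iff.1 hv
    constructor
    · apply decide_eq_false
      rintro ⟨-, hh⟩
      have h2 : Function.update e.var none d none = Function.update e.var none d (xvar i) := hh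
      rw [hρn, hρx i] at h2
      exact hg i h2
    · apply decide_eq_false
      rintro ⟨-, hh⟩
      have h2 : Function.update e.var none d (xvar i) = Function.update e.var none d none := hh
      rw [hρn, hρx i] at h2
      exact hg i h2.symm
  · intro a ha
    apply decide_eq_false
    rintro ⟨hh, -⟩
    rw [ha] at hh
    exact Bool.false_ne_true hh

theorem exists_type {d : D} (hg : guardAt (markEnv e mk) d) :
    ∃ τ ∈ extSigns 𝒜 ℱ (XS n m) none, extTruth (markEnv e mk) d τ :=
  ⟨tauOf e mk d, mem_extSigns.2 (extSignB_tauOf e mk hg), extTruth_tauOf e mk d⟩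

theorem count_set_eq {τ : Atom 𝒜 ℱ (VV n m) → Bool} (hτ : extSignB (XS n m) none τ = true) :
    {d : D | (extFml (XS n m) none τ).Sat (e.updVar none d)} =
    {d : D | guardAt (markEnv e mk) d ∧ extTruth (markEnv e mk) d τ} := by
  ext d
  simp only [Set.mem_setOf_eq]
  rw [extFml_sat_iff (mk := mk)]
  exact ⟨fun h => ⟨extTruth_guard hτ h, h⟩, fun h => h.2⟩

theorem csFml_sat_iff (c : CStar 𝒜 ℱ n m) :
    (csFml c).Sat e ↔ (eqSat c (markEnv e mk) ∧ gccatTruth (markEnv e mk) c.σ ∧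
      ∀ τ ∈ extSigns 𝒜 ℱ (XS n m) none, (c.γ τ).sat
        {d : D | guardAt (markEnv e mk) d ∧ extTruth (markEnv e mk) d τ}.ncard) := by
  rw [csFml]
  rw [show ∀ (A B C : Fml 𝒜 ℱ (VV n m)), (A.and (B.and C)).Sat e ↔
    (A.Sat e ∧ B.Sat e ∧ C.Sat e) from fun _ _ _ => Iff.rfl]
  apply and_congr
  · rw [listConj_sat]
    constructor
    · intro h j
      exact h _ (List.mem_map_of_mem (List.mem_finRange j))
    · intro h F hF
      obtain ⟨j, _, rfl⟩ := List.mem_map.1 hF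
      exact h j
  apply and_congr
  · exact gccatFml_sat_iff
  · rw [listConj_sat]
    constructor
    · intro h τ hτ
      have := h _ (List.mem_map_of_mem hτ)
      rw [show (Fml.cnt (c.γ τ) none (extFml (XS n m) none τ)).Sat e ↔
        (c.γ τ).sat {d : D | (extFml (XS n m) none τ).Sat (e.updVar none d)}.ncard
        from Iff.rfl] at this
      rwa [count_set_eq e mk (mem_extSigns.1 hτ)] at this
    · intro h F hF
      obtain ⟨τ, hτ, rfl⟩ := List.mem_map.1 hF
      rw [show (Fml.cnt (c.γ τ) none (extFml (XS n m) none τ)).Sat e ↔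
        (c.γ τ).sat {d : D | (extFml (XS n m) none τ).Sat (e.updVar none d)}.ncard
        from Iff.rfl]
      rw [count_set_eq e mk (mem_extSigns.1 hτ)]
      exact h τ hτ

theorem semM_iff_foldP (s : Multiset (Blk 𝒜 ℱ n m)) (u : Env (𝒜 ⊕ Fin 2) ℱ (VV n m) D) :
    semM s u ↔ FoldP (s.toList.map Blk.sem) u := by
  unfold semM FoldP
  rw [List.foldr_map]

theorem semM_coe (l : List (Blk 𝒜 ℱ n m)) (u : Env (𝒜 ⊕ Fin 2) ℱ (VV n m) D) :
    semM (↑l) u ↔ FoldP (l.map Blk.sem) u := by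
  rw [semM_iff_foldP]
  have hperm : ((↑l : Multiset (Blk 𝒜 ℱ n m)).toList).Perm l :=
    Multiset.coe_eq_coe.mp (Multiset.coe_toList _)
  exact foldP_perm (hperm.map _) u

theorem blkList_coe (τ : Atom 𝒜 ℱ (VV n m) → Bool) (q : CQ) :
    (↑(blkList mk τ q) : Multiset (Blk 𝒜 ℱ n m)) = xstrBlocks mk τ q := by
  cases q with
  | exact k =>
      simp only [blkList, xstrBlocks]
      rw [← Multiset.coe_add, Multiset.coe_replicate, Multiset.coe_singleton]
  | atLeast k =>
      simp only [blkList, xstrBlocks]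
      rw [← Multiset.coe_add, Multiset.coe_replicate]
      congr 1

theorem strBlocks_coe (c : CStar 𝒜 ℱ n m) :
    strBlocks mk c = (↑(Blk.kstr c.σ ::
      (extSigns 𝒜 ℱ (XS n m) none).flatMap (fun τ => blkList mk τ (c.γ τ))) :
      Multiset (Blk 𝒜 ℱ n m)) := by
  rw [strBlocks, ← Multiset.cons_coe]
  congr 1
  induction (extSigns 𝒜 ℱ (XS n m) none) with
  | nil => rfl
  | cons τ T ih =>
      rw [List.flatMap_cons, List.map_cons, List.sum_cons, ← Multiset.coe_add, ← ih,
        blkList_coe]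

end AuxChar


section AuxFwd
set_option linter.unusedSectionVars false
open scoped Classical
variable {𝒜 ℱ : Type} [Fintype 𝒜] [DecidableEq 𝒜] [Fintype ℱ] [DecidableEq ℱ]
  {n m : ℕ} {D : Type} [Finite D]
variable (e : Env 𝒜 ℱ (VV n m) D) (mk : Finset (Fin 2))

theorem semM_of_counts (c : CStar 𝒜 ℱ n m) (hc : c.WF) (hmk : mk.Nonempty)
    (hσ : gccatTruth (markEnv e mk) c.σ)
    (hcnt : ∀ τ ∈ extSigns 𝒜 ℱ (XS n m) none, (c.γ τ).sat
      {d : D | guardAt (markEnv e mk) d ∧ extTruth (markEnv e mk) d τ}.ncard) :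
    semM (strBlocks mk c) (markEnv e mk) := by
  have Heq : TupEq e := heq_of_gccat e mk hc hσ
  rw [strBlocks_coe, semM_coe, List.map_cons]
  refine ⟨envOf e mk (fun d => ¬ guardAt (markEnv e mk) d),
    envOf e mk (fun d => guardAt (markEnv e mk) d ∧
      ∃ τ ∈ extSigns 𝒜 ℱ (XS n m) none, extTruth (markEnv e mk) d τ), ?_,
    sem_kstr e mk hσ,
    fold_groups e mk Heq hmk c.γ _ nodup_extSigns (fun τ h => mem_extSigns.1 h) hcnt⟩
  have hsp := envOf_split e mk (P := fun _ => True)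
    (P₁ := fun d => ¬ guardAt (markEnv e mk) d)
    (P₂ := fun d => guardAt (markEnv e mk) d ∧
      ∃ τ ∈ extSigns 𝒜 ℱ (XS n m) none, extTruth (markEnv e mk) d τ) (fun d => ?_)
  · rwa [envOf_true] at hsp
  · by_cases hg : guardAt (markEnv e mk) d
    · exact ⟨⟨fun _ => Or.inr ⟨hg, exists_type e mk hg⟩, fun _ => trivial⟩,
        fun h => h.1 h.2.1⟩
    · exact ⟨⟨fun _ => Or.inl hg, fun _ => trivial⟩, fun h => hg h.2.1⟩

end AuxFwd


section AuxBwd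
set_option linter.unusedSectionVars false
open scoped Classical
variable {𝒜 ℱ : Type} [Fintype 𝒜] [DecidableEq 𝒜] [Fintype ℱ] [DecidableEq ℱ]
  {n m : ℕ} {D : Type} [Finite D]
variable (mk : Finset (Fin 2))

/-- the allowed non-`kstr` blocks -/
def Allowed (b : Blk 𝒜 ℱ n m) : Prop :=
  b = Blk.empe ∨ ∃ τ, extSignB (XS n m) none τ = true ∧
    (b = Blk.oneNum mk τ ∨ b = Blk.anyNum mk τ)

/-- the set of elements claimed by an environment with extension type `τ` -/
def KSet (u : Env (𝒜 ⊕ Fin 2) ℱ (VV n m) D) (τ : Atom 𝒜 ℱ (VV n m) → Bool) : Set D :=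
  {d | guardAt u d ∧ extTruth u d τ ∧ markTruth u d mk}

theorem allEmpty_of_emp {u : Env (𝒜 ⊕ Fin 2) ℱ (VV n m) D} (hu : emp' u) {d : D}
    (hg : guardAt u d) : allEmptyAt u d := by
  have hρn : Function.update u.var none d none = d := Function.update_self _ _ _
  have hρx : ∀ i : Fin n, Function.update u.var none d (xvar i) = u.var (xvar i) :=
    fun i => Function.update_of_ne (by simp [xvar]) _ _
  constructor
  · intro a ha
    rcases extAtom_cases ha with ⟨A, rfl⟩ | ⟨f, rfl⟩ | ⟨f, i, rfl⟩ | ⟨f, i, rfl⟩ |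
      rfl | ⟨i, rfl⟩ | ⟨i, rfl⟩
    · rw [emptyExtSign_eq_false (by simp)]
      simp only [Bool.false_eq_true, iff_false]
      exact hu.1 _ _
    · rw [emptyExtSign_eq_false (by simp)]
      simp only [Bool.false_eq_true, iff_false]
      exact hu.2 _ _ _
    · rw [emptyExtSign_eq_false (by simp)]
      simp only [Bool.false_eq_true, iff_false]
      exact hu.2 _ _ _
    · rw [emptyExtSign_eq_false (by simp)]
      simp only [Bool.false_eq_true, iff_false]
      exact hu.2 _ _ _
    · show _ = _ ↔ _
      simp [emptyExtSign]
    · show _ = _ ↔ _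
      rw [hρn, hρx i, emptyExtSign_eq_false (by simp [xvar])]
      simp only [Bool.false_eq_true, iff_false]
      exact hg i
    · show _ = _ ↔ _
      rw [hρn, hρx i, emptyExtSign_eq_false (by simp [xvar])]
      simp only [Bool.false_eq_true, iff_false]
      exact fun hh => hg i hh.symm
  · intro q
    simp only [Finset.notMem_empty, iff_false]
    exact hu.1 _ _

theorem sem_allEmpty {b : Blk 𝒜 ℱ n m} {u₁ : Env (𝒜 ⊕ Fin 2) ℱ (VV n m) D}
    (hb : Allowed mk b) (hsem : Blk.sem b u₁) {d : D} (hg : guardAt u₁ d)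
    (hnm : ∀ q ∈ mk, ¬ u₁.un (Sum.inr q) d) (hmk : mk.Nonempty) : allEmptyAt u₁ d := by
  obtain ⟨q₀, hq₀⟩ := hmk
  rcases hb with rfl | ⟨τ, hτ, rfl | rfl⟩
  · exact hsem.2 d hg
  · rcases hsem.1.2 d hg with ⟨hT, hM⟩ | h
    · exact absurd ((hM q₀).2 hq₀) (hnm q₀ hq₀)
    · exact h
  · rcases hsem.2 d hg with ⟨hT, hM⟩ | h
    · exact absurd ((hM q₀).2 hq₀) (hnm q₀ hq₀)
    · exact h

theorem sem_claims {b : Blk 𝒜 ℱ n m} {u₁ : Env (𝒜 ⊕ Fin 2) ℱ (VV n m) D}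
    (hb : Allowed mk b) (hsem : Blk.sem b u₁) {d : D} (hg : guardAt u₁ d)
    {q₀ : Fin 2} (hq₀ : q₀ ∈ mk) (hu : u₁.un (Sum.inr q₀) d) :
    ∃ τ', extSignB (XS n m) none τ' = true ∧
      (b = Blk.oneNum mk τ' ∨ b = Blk.anyNum mk τ') ∧
      extTruth u₁ d τ' ∧ markTruth u₁ d mk := by
  rcases hb with rfl | ⟨τ, hτ, rfl | rfl⟩
  · have := (hsem.2 d hg).2 q₀
    simp only [Finset.notMem_empty, iff_false] at this
    exact absurd hu this
  · rcases hsem.1.2 d hg with ⟨hT, hM⟩ | h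
    · exact ⟨τ, hτ, Or.inl rfl, hT, hM⟩
    · have := h.2 q₀
      simp only [Finset.notMem_empty, iff_false] at this
      exact absurd hu this
  · rcases hsem.2 d hg with ⟨hT, hM⟩ | h
    · exact ⟨τ, hτ, Or.inr rfl, hT, hM⟩
    · have := h.2 q₀
      simp only [Finset.notMem_empty, iff_false] at this
      exact absurd hu this

theorem fold_allEmpty (hmk : mk.Nonempty) :
    ∀ (l : List (Blk 𝒜 ℱ n m)) (u : Env (𝒜 ⊕ Fin 2) ℱ (VV n m) D),
    FoldP (l.map Blk.sem) u → (∀ b ∈ l, Allowed mk b) → ∀ d : D, guardAt u d →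
    (∀ q ∈ mk, ¬ u.un (Sum.inr q) d) → allEmptyAt u d := by
  intro l
  induction l with
  | nil => exact fun u hu _ d hg _ => allEmpty_of_emp hu hg
  | cons b l ih =>
      rintro u ⟨u₁, u₂, hs, h1, h2⟩ hall d hg hnm
      have hg1 : guardAt u₁ d := (guardAt_congr hs.1 d).2 (by rwa [guardAt_congr rfl])
      have hg2 : guardAt u₂ d := (guardAt_congr hs.2.1 d).2 (by rwa [guardAt_congr rfl])
      have hnm1 : ∀ q ∈ mk, ¬ u₁.un (Sum.inr q) d := fun q hq hh =>
        hnm q hq (((hs.2.2.1 (Sum.inr q) d).1).2 (Or.inl hh))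
      have hnm2 : ∀ q ∈ mk, ¬ u₂.un (Sum.inr q) d := fun q hq hh =>
        hnm q hq (((hs.2.2.1 (Sum.inr q) d).1).2 (Or.inr hh))
      exact allEmptyAt_split hs
        (sem_allEmpty mk (hall b (List.mem_cons_self)) h1 hg1 hnm1 hmk)
        (ih u₂ h2 (fun b' hb' => hall b' (List.mem_cons_of_mem _ hb')) d hg2 hnm2)

theorem marker_unique {u u₁ u₂ : Env (𝒜 ⊕ Fin 2) ℱ (VV n m) D} (hs : u.Split u₁ u₂)
    {q : Fin 2} {d : D} (h1 : u₁.un (Sum.inr q) d) (h2 : u₂.un (Sum.inr q) d) : False :=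
  (hs.2.2.1 (Sum.inr q) d).2 ⟨h1, h2⟩

theorem step_decomp {u u₁ u₂ : Env (𝒜 ⊕ Fin 2) ℱ (VV n m) D} (hs : u.Split u₁ u₂)
    {b : Blk 𝒜 ℱ n m} (hb : Allowed mk b) (hsem : Blk.sem b u₁)
    (hrest : ∀ d : D, guardAt u₂ d → (∀ q ∈ mk, ¬ u₂.un (Sum.inr q) d) → allEmptyAt u₂ d)
    (hmk : mk.Nonempty) {τ : Atom 𝒜 ℱ (VV n m) → Bool}
    (hτ : extSignB (XS n m) none τ = true) :
    KSet mk u τ = KSet mk u₁ τ ∪ KSet mk u₂ τ ∧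
      Disjoint (KSet mk u₁ τ) (KSet mk u₂ τ) := by
  obtain ⟨q₀, hq₀⟩ := hmk
  constructor
  · ext d
    simp only [KSet, Set.mem_setOf_eq, Set.mem_union]
    constructor
    · rintro ⟨hg, hT, hM⟩
      have hg1 : guardAt u₁ d := (guardAt_congr hs.1 d).2 hg
      have hg2 : guardAt u₂ d := (guardAt_congr hs.2.1 d).2 hg
      have hmarker : u.un (Sum.inr q₀) d := (hM q₀).2 hq₀
      rcases (hs.2.2.1 (Sum.inr q₀) d).1.1 hmarker with hin1 | hin2
      · -- claimed by b
        obtain ⟨τ', hτ', hbeq, hT', hM'⟩ := sem_claims mk hb hsem hg1 hq₀ hin1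
        have hnm2 : ∀ q ∈ mk, ¬ u₂.un (Sum.inr q) d := fun q hq hh =>
          marker_unique hs ((hM' q).2 hq) hh
        have hAE2 : allEmptyAt u₂ d := hrest d hg2 hnm2
        have hTu : extTruth u d τ' := (extTruth_split_left hs.comm hAE2).2 hT'
        have : τ' = τ := ext_canon hτ' hτ hTu hT
        subst this
        exact Or.inl ⟨hg1, hT', hM'⟩
      · -- claimed by the rest
        have hnm1 : ∀ q ∈ mk, ¬ u₁.un (Sum.inr q) d := by
          intro q hq hh
          obtain ⟨τ', hτ', hbeq, hT', hM'⟩ := sem_claims mk hb hsem hg1 hq hh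
          exact marker_unique hs ((hM' q₀).2 hq₀) hin2
        have hAE1 : allEmptyAt u₁ d := sem_allEmpty mk hb hsem hg1 hnm1 ⟨q₀, hq₀⟩
        exact Or.inr ⟨hg2, (extTruth_split_left hs hAE1).1 hT,
          (markTruth_split_left hs hAE1.2).1 hM⟩
    · rintro (⟨hg1, hT1, hM1⟩ | ⟨hg2, hT2, hM2⟩)
      · have hg : guardAt u d := (guardAt_congr hs.1 d).1 hg1
        have hg2 : guardAt u₂ d := (guardAt_congr hs.2.1 d).2 hg
        have hnm2 : ∀ q ∈ mk, ¬ u₂.un (Sum.inr q) d := fun q hq hh =>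
          marker_unique hs ((hM1 q).2 hq) hh
        have hAE2 : allEmptyAt u₂ d := hrest d hg2 hnm2
        exact ⟨hg, (extTruth_split_left hs.comm hAE2).2 hT1,
          (markTruth_split_left hs.comm hAE2.2).2 hM1⟩
      · have hg : guardAt u d := (guardAt_congr hs.2.1 d).1 hg2
        have hg1 : guardAt u₁ d := (guardAt_congr hs.1 d).2 hg
        have hnm1 : ∀ q ∈ mk, ¬ u₁.un (Sum.inr q) d := by
          intro q hq hh
          obtain ⟨τ', hτ', hbeq, hT', hM'⟩ := sem_claims mk hb hsem hg1 hq hh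
          exact marker_unique hs ((hM' q₀).2 hq₀) ((hM2 q₀).2 hq₀)
        have hAE1 : allEmptyAt u₁ d := sem_allEmpty mk hb hsem hg1 hnm1 ⟨q₀, hq₀⟩
        exact ⟨hg, (extTruth_split_left hs hAE1).2 hT2,
          (markTruth_split_left hs hAE1.2).2 hM2⟩
  · rw [Set.disjoint_left]
    rintro d ⟨hg1, hT1, hM1⟩ ⟨hg2, hT2, hM2⟩
    exact marker_unique hs ((hM1 q₀).2 hq₀) ((hM2 q₀).2 hq₀)

theorem KSet_empty_of_other {b : Blk 𝒜 ℱ n m} {u₁ : Env (𝒜 ⊕ Fin 2) ℱ (VV n m) D}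
    (hb : Allowed mk b) (hsem : Blk.sem b u₁) (hmk : mk.Nonempty)
    {τ : Atom 𝒜 ℱ (VV n m) → Bool} (hτ : extSignB (XS n m) none τ = true)
    (hbne : b ≠ Blk.oneNum mk τ ∧ b ≠ Blk.anyNum mk τ) : KSet mk u₁ τ = ∅ := by
  obtain ⟨q₀, hq₀⟩ := hmk
  ext d
  simp only [KSet, Set.mem_setOf_eq, Set.mem_empty_iff_false, iff_false]
  rintro ⟨hg, hT, hM⟩
  obtain ⟨τ', hτ', hbeq, hT', hM'⟩ := sem_claims mk hb hsem hg hq₀ ((hM q₀).2 hq₀)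
  have : τ' = τ := ext_canon hτ' hτ hT' hT
  subst this
  rcases hbeq with rfl | rfl
  · exact hbne.1 rfl
  · exact hbne.2 rfl

/-- number of occurrences of `oneNum mk τ` -/
noncomputable def cntOne (l : List (Blk 𝒜 ℱ n m)) (τ : Atom 𝒜 ℱ (VV n m) → Bool) : ℕ :=
  (l.map fun b => if b = Blk.oneNum mk τ then 1 else 0).sum

theorem fold_count_exact (hmk : mk.Nonempty) {τ : Atom 𝒜 ℱ (VV n m) → Bool}
    (hτ : extSignB (XS n m) none τ = true) :
    ∀ (l : List (Blk 𝒜 ℱ n m)) (u : Env (𝒜 ⊕ Fin 2) ℱ (VV n m) D),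
    FoldP (l.map Blk.sem) u → (∀ b ∈ l, Allowed mk b) → Blk.anyNum mk τ ∉ l →
    (KSet mk u τ).ncard = cntOne mk l τ := by
  obtain ⟨q₀, hq₀⟩ := hmk
  intro l
  induction l with
  | nil =>
      intro u hu _ _
      have : KSet mk u τ = ∅ := by
        ext d
        simp only [KSet, Set.mem_setOf_eq, Set.mem_empty_iff_false, iff_false]
        rintro ⟨hg, hT, hM⟩
        exact hu.1 _ _ ((hM q₀).2 hq₀)
      rw [this]
      simp [cntOne]
  | cons b l ih =>
      rintro u ⟨u₁, u₂, hs, h1, h2⟩ hall hnotany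
      have hrest := fun d hg hnm => fold_allEmpty mk ⟨q₀, hq₀⟩ l u₂ h2
        (fun b' hb' => hall b' (List.mem_cons_of_mem _ hb')) d hg hnm
      obtain ⟨hKeq, hKdis⟩ := step_decomp mk hs (hall b (List.mem_cons_self)) h1 hrest
        ⟨q₀, hq₀⟩ hτ
      rw [hKeq, Set.ncard_union_eq hKdis (Set.toFinite _) (Set.toFinite _)]
      have hl : (KSet mk u₂ τ).ncard = cntOne mk l τ :=
        ih u₂ h2 (fun b' hb' => hall b' (List.mem_cons_of_mem _ hb'))
          (fun hh => hnotany (List.mem_cons_of_mem _ hh))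
      rw [hl]
      have hcnt : cntOne mk (b :: l) τ = (if b = Blk.oneNum mk τ then 1 else 0) +
          cntOne mk l τ := by
        simp [cntOne]
      rw [hcnt]
      congr 1
      by_cases hbone : b = Blk.oneNum mk τ
      · subst hbone
        rw [if_pos rfl]
        exact h1.2
      · rw [if_neg hbone]
        rw [KSet_empty_of_other mk (hall b (List.mem_cons_self)) h1 ⟨q₀, hq₀⟩ hτ
          ⟨hbone, fun hh => hnotany (hh ▸ List.mem_cons_self)⟩]
        simp

theorem fold_count_ge (hmk : mk.Nonempty) {τ : Atom 𝒜 ℱ (VV n m) → Bool}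
    (hτ : extSignB (XS n m) none τ = true) :
    ∀ (l : List (Blk 𝒜 ℱ n m)) (u : Env (𝒜 ⊕ Fin 2) ℱ (VV n m) D),
    FoldP (l.map Blk.sem) u → (∀ b ∈ l, Allowed mk b) →
    cntOne mk l τ ≤ (KSet mk u τ).ncard := by
  obtain ⟨q₀, hq₀⟩ := hmk
  intro l
  induction l with
  | nil => intro u _ _; simp [cntOne]
  | cons b l ih =>
      rintro u ⟨u₁, u₂, hs, h1, h2⟩ hall
      have hrest := fun d hg hnm => fold_allEmpty mk ⟨q₀, hq₀⟩ l u₂ h2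
        (fun b' hb' => hall b' (List.mem_cons_of_mem _ hb')) d hg hnm
      obtain ⟨hKeq, hKdis⟩ := step_decomp mk hs (hall b (List.mem_cons_self)) h1 hrest
        ⟨q₀, hq₀⟩ hτ
      rw [hKeq, Set.ncard_union_eq hKdis (Set.toFinite _) (Set.toFinite _)]
      have hl := ih u₂ h2 (fun b' hb' => hall b' (List.mem_cons_of_mem _ hb'))
      have hcnt : cntOne mk (b :: l) τ = (if b = Blk.oneNum mk τ then 1 else 0) +
          cntOne mk l τ := by
        simp [cntOne]
      rw [hcnt]
      have hone : (if b = Blk.oneNum mk τ then 1 else 0) ≤ (KSet mk u₁ τ).ncard := by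
        by_cases hbone : b = Blk.oneNum mk τ
        · subst hbone
          rw [if_pos rfl]
          have : (KSet mk u₁ τ).ncard = 1 := h1.2
          omega
        · simp [if_neg hbone]
      omega

theorem sem_gccat_empty {b : Blk 𝒜 ℱ n m} {u₁ : Env (𝒜 ⊕ Fin 2) ℱ (VV n m) D}
    (hb : Allowed mk b) (hsem : Blk.sem b u₁) : gccatTruth u₁ emptyGSign := by
  rcases hb with rfl | ⟨τ, hτ, rfl | rfl⟩
  · exact hsem.1
  · exact hsem.1.1
  · exact hsem.1

theorem emptyGSign_false {a : Atom 𝒜 ℱ (VV n m)} (hne : a.isEq = false) :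
    (emptyGSign a : Bool) = false := by
  cases a <;> simp [emptyGSign, Atom.isEq] at hne ⊢

theorem fold_gccat_empty :
    ∀ (l : List (Blk 𝒜 ℱ n m)) (u : Env (𝒜 ⊕ Fin 2) ℱ (VV n m) D),
    FoldP (l.map Blk.sem) u → (∀ b ∈ l, Allowed mk b) →
    ∀ a : Atom 𝒜 ℱ (VV n m), a.varset ⊆ XS n m → a.isEq = false →
    ¬ a.holdsAt u u.var := by
  intro l
  induction l with
  | nil =>
      intro u hu _ a _ hne
      cases a with
      | un A v => exact hu.1 _ _
      | bin f v w => exact hu.2 _ _ _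
      | eq v w => simp [Atom.isEq] at hne
  | cons b l ih =>
      rintro u ⟨u₁, u₂, hs, h1, h2⟩ hall a ha hne hh
      rcases (holdsAt_split hs hne u.var).1.1 hh with hh1 | hh2
      · have := (sem_gccat_empty mk (hall b (List.mem_cons_self)) h1) a ha
        rw [hs.1] at this
        rw [this, emptyGSign_false hne] at hh1
        exact Bool.false_ne_true hh1
      · have := ih u₂ h2 (fun b' hb' => hall b' (List.mem_cons_of_mem _ hb')) a ha hne
        rw [hs.2.1] at this
        exact this hh2

end AuxBwd


section AuxFinal
set_option linter.unusedSectionVars false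
open scoped Classical
variable {𝒜 ℱ : Type} [Fintype 𝒜] [DecidableEq 𝒜] [Fintype ℱ] [DecidableEq ℱ]
  {n m : ℕ} {D : Type} [Finite D]
variable (e : Env 𝒜 ℱ (VV n m) D) (mk : Finset (Fin 2))

/-- the count prescribed by a counting quantifier -/
def numOne : CQ → ℕ
  | .exact k => k
  | .atLeast k => k

theorem mem_blkList {b : Blk 𝒜 ℱ n m} {τ' : Atom 𝒜 ℱ (VV n m) → Bool} {q : CQ}
    (hb : b ∈ blkList mk τ' q) :
    b = Blk.empe ∨ b = Blk.oneNum mk τ' ∨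
      ((∃ k, q = .atLeast k) ∧ b = Blk.anyNum mk τ') := by
  cases q with
  | exact k =>
      simp only [blkList, List.mem_append, List.mem_replicate, List.mem_singleton] at hb
      rcases hb with ⟨-, rfl⟩ | rfl
      · exact Or.inr (Or.inl rfl)
      · exact Or.inl rfl
  | atLeast k =>
      simp only [blkList, List.mem_append, List.mem_replicate, List.mem_cons,
        List.mem_singleton, List.not_mem_nil, or_false] at hb
      rcases hb with ⟨-, rfl⟩ | rfl | rfl
      · exact Or.inr (Or.inl rfl)
      · exact Or.inl rfl
      · exact Or.inr (Or.inr ⟨⟨k, rfl⟩, rfl⟩)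

theorem cntOne_append (l₁ l₂ : List (Blk 𝒜 ℱ n m)) (τ : Atom 𝒜 ℱ (VV n m) → Bool) :
    cntOne mk (l₁ ++ l₂) τ = cntOne mk l₁ τ + cntOne mk l₂ τ := by
  simp [cntOne]

theorem cntOne_nil (τ : Atom 𝒜 ℱ (VV n m) → Bool) : cntOne mk ([] : List (Blk 𝒜 ℱ n m)) τ = 0 := by
  simp [cntOne]

theorem cntOne_cons (b : Blk 𝒜 ℱ n m) (l : List (Blk 𝒜 ℱ n m)) (τ : Atom 𝒜 ℱ (VV n m) → Bool) :
    cntOne mk (b :: l) τ = (if b = Blk.oneNum mk τ then 1 else 0) + cntOne mk l τ := by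
  simp [cntOne]

theorem cntOne_replicate (k : ℕ) {τ' τ : Atom 𝒜 ℱ (VV n m) → Bool} :
    cntOne mk (List.replicate k (Blk.oneNum mk τ')) τ = if τ' = τ then k else 0 := by
  induction k with
  | zero => simp [cntOne_nil]
  | succ k ih =>
      rw [List.replicate_succ, cntOne_cons, ih]
      by_cases h : τ' = τ
      · subst h
        rw [if_pos rfl]
        rw [if_pos rfl]
        rw [if_pos rfl]
        omega
      · rw [if_neg (by simp [h]), if_neg h, if_neg h]

theorem cntOne_blkList_self (τ : Atom 𝒜 ℱ (VV n m) → Bool) (q : CQ) :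
    cntOne mk (blkList mk τ q) τ = numOne q := by
  cases q with
  | exact k =>
      rw [blkList, cntOne_append, cntOne_replicate, if_pos rfl, cntOne_cons,
        if_neg (by simp), cntOne_nil, numOne]
      omega
  | atLeast k =>
      rw [blkList, cntOne_append, cntOne_replicate, if_pos rfl, cntOne_cons,
        if_neg (by simp), cntOne_cons, if_neg (by simp), cntOne_nil, numOne]
      omega

theorem cntOne_blkList_other {τ τ' : Atom 𝒜 ℱ (VV n m) → Bool} (hne : τ' ≠ τ) (q : CQ) :
    cntOne mk (blkList mk τ' q) τ = 0 := by
  cases q with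
  | exact k =>
      rw [blkList, cntOne_append, cntOne_replicate, if_neg hne, cntOne_cons,
        if_neg (by simp), cntOne_nil]
  | atLeast k =>
      rw [blkList, cntOne_append, cntOne_replicate, if_neg hne, cntOne_cons,
        if_neg (by simp), cntOne_cons, if_neg (by simp [hne]), cntOne_nil]

theorem cntOne_flatMap_zero (γ : (Atom 𝒜 ℱ (VV n m) → Bool) → CQ)
    {τ : Atom 𝒜 ℱ (VV n m) → Bool} :
    ∀ (T : List (Atom 𝒜 ℱ (VV n m) → Bool)), τ ∉ T →
    cntOne mk (T.flatMap (fun τ' => blkList mk τ' (γ τ'))) τ = 0 := by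
  intro T
  induction T with
  | nil => intro _; simp [cntOne]
  | cons τ'' T ih =>
      intro hτ
      rw [List.flatMap_cons, cntOne_append,
        cntOne_blkList_other mk (fun hh => hτ (by rw [hh]; exact List.mem_cons_self)) _,
        ih (fun hh => hτ (List.mem_cons_of_mem _ hh))]

theorem cntOne_flatMap (γ : (Atom 𝒜 ℱ (VV n m) → Bool) → CQ)
    {τ : Atom 𝒜 ℱ (VV n m) → Bool} :
    ∀ (T : List (Atom 𝒜 ℱ (VV n m) → Bool)), T.Nodup → τ ∈ T →
    cntOne mk (T.flatMap (fun τ' => blkList mk τ' (γ τ'))) τ = numOne (γ τ) := by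
  intro T
  induction T with
  | nil => intro _ h; simp at h
  | cons τ'' T ih =>
      intro hnd hτ
      rw [List.flatMap_cons, cntOne_append]
      rcases List.mem_cons.1 hτ with rfl | hτ'
      · rw [cntOne_blkList_self, cntOne_flatMap_zero mk γ T (List.nodup_cons.1 hnd).1]
        omega
      · have hne : τ'' ≠ τ := fun hh => (List.nodup_cons.1 hnd).1 (hh ▸ hτ')
        rw [cntOne_blkList_other mk hne, ih (List.nodup_cons.1 hnd).2 hτ']
        omega

theorem anyNum_not_mem_flatMap (γ : (Atom 𝒜 ℱ (VV n m) → Bool) → CQ)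
    {τ : Atom 𝒜 ℱ (VV n m) → Bool} {k : ℕ} (hγ : γ τ = .exact k)
    (T : List (Atom 𝒜 ℱ (VV n m) → Bool)) :
    Blk.anyNum mk τ ∉ T.flatMap (fun τ' => blkList mk τ' (γ τ')) := by
  intro hmem
  obtain ⟨τ', hτ', hb⟩ := List.mem_flatMap.1 hmem
  rcases mem_blkList mk hb with h | h | ⟨⟨k', hk'⟩, h⟩
  · exact absurd h (by simp)
  · exact absurd h (by simp)
  · have : τ' = τ := by
      have := h
      simp only [Blk.anyNum.injEq] at this
      exact this.2.symm
    subst this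
    rw [hγ] at hk'
    exact CQ.noConfusion hk'

theorem counts_of_semM (c : CStar 𝒜 ℱ n m) (hmk : mk.Nonempty)
    (h : semM (strBlocks mk c) (markEnv e mk)) :
    gccatTruth (markEnv e mk) c.σ ∧
      ∀ τ ∈ extSigns 𝒜 ℱ (XS n m) none, (c.γ τ).sat
        {d : D | guardAt (markEnv e mk) d ∧ extTruth (markEnv e mk) d τ}.ncard := by
  rw [strBlocks_coe, semM_coe, List.map_cons] at h
  obtain ⟨u₁, u₂, hs, hk, h2⟩ := h
  set L := (extSigns 𝒜 ℱ (XS n m) none).flatMap (fun τ => blkList mk τ (c.γ τ)) with hL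
  have hall : ∀ b ∈ L, Allowed mk b := by
    intro b hb
    obtain ⟨τ', hτ', hb'⟩ := List.mem_flatMap.1 hb
    rcases mem_blkList mk hb' with rfl | rfl | ⟨-, rfl⟩
    · exact Or.inl rfl
    · exact Or.inr ⟨τ', mem_extSigns.1 hτ', Or.inl rfl⟩
    · exact Or.inr ⟨τ', mem_extSigns.1 hτ', Or.inr rfl⟩
  constructor
  · intro a ha
    cases he : a.isEq with
    | true =>
        have hh := hk.1 a ha
        rw [hs.1] at hh
        rwa [holdsAt_eq_indep he (markEnv e mk) u₁]
    | false =>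
        have hh := hk.1 a ha
        rw [hs.1] at hh
        have hsp := holdsAt_split hs (a := a) he (markEnv e mk).var
        have hn2 : ¬ a.holdsAt u₂ (markEnv e mk).var := by
          have := fold_gccat_empty mk L u₂ h2 hall a ha he
          rwa [hs.2.1] at this
        rw [← hh]
        rw [hsp.1]
        constructor
        · rintro (h' | h')
          · exact h'
          · exact absurd h' hn2
        · exact Or.inl
  · intro τ hτ
    have hτB := mem_extSigns.1 hτ
    have hKeq : {d : D | guardAt (markEnv e mk) d ∧ extTruth (markEnv e mk) d τ} =
        KSet mk u₂ τ := by
      ext d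
      simp only [Set.mem_setOf_eq, KSet]
      constructor
      · rintro ⟨hg, hT⟩
        have hg1 : guardAt u₁ d := (guardAt_congr hs.1 d).2 hg
        have hg2 : guardAt u₂ d := (guardAt_congr hs.2.1 d).2 hg
        have hAE1 : allEmptyAt u₁ d := hk.2 d hg1
        have hM : markTruth (markEnv e mk) d mk := by
          intro q
          rw [markEnv_un_inr]
          exact ⟨fun hh => hh.1, fun hh => ⟨hh, hg⟩⟩
        exact ⟨hg2, (extTruth_split_left hs hAE1).1 hT,
          (markTruth_split_left hs hAE1.2).1 hM⟩
      · rintro ⟨hg2, hT2, hM2⟩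
        have hg : guardAt (markEnv e mk) d := (guardAt_congr hs.2.1 d).1 hg2
        have hg1 : guardAt u₁ d := (guardAt_congr hs.1 d).2 hg
        have hAE1 : allEmptyAt u₁ d := hk.2 d hg1
        exact ⟨hg, (extTruth_split_left hs hAE1).2 hT2⟩
    rw [hKeq]
    cases hγ : c.γ τ with
    | exact k =>
        show (KSet mk u₂ τ).ncard = k
        rw [fold_count_exact mk hmk hτB L u₂ h2 hall
          (anyNum_not_mem_flatMap mk c.γ hγ _)]
        rw [hL, cntOne_flatMap mk c.γ _ nodup_extSigns hτ, hγ, numOne]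
    | atLeast k =>
        show k ≤ (KSet mk u₂ τ).ncard
        have := fold_count_ge mk hmk hτB L u₂ h2 hall
        have hcnt : cntOne mk L τ = k := by
          rw [hL, cntOne_flatMap mk c.γ _ nodup_extSigns hτ, hγ, numOne]
        omega

end AuxFinal

/-- **Correctness of the spatial translation of counting
stars.** If `e` is an environment for the language `L`, `C` a counting star
formula in `L`, and `m ∈ {{1}, {2}, {1,2}}` (i.e. a nonempty set of markers),
then `⟦C⟧e = ⟦str_m(C)⟧e^m`. -/
theorem str_translation_correct {𝒜 ℱ : Type}
    [Fintype 𝒜] [DecidableEq 𝒜] [Fintype ℱ] [DecidableEq ℱ] {n m : ℕ}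
    (c : CStar 𝒜 ℱ n m) (hc : c.WF) (mk : Finset (Fin 2)) (hmk : mk.Nonempty)
    (D : Type) [Finite D] (e : Env 𝒜 ℱ (VV n m) D) :
    (csFml c).Sat e ↔ strSat mk c (markEnv e mk) := by
  rw [csFml_sat_iff e mk c]
  constructor
  · rintro ⟨h1, h2, h3⟩
    exact ⟨h1, semM_of_counts e mk c hc hmk h2 h3⟩
  · rintro ⟨h1, h2⟩
    obtain ⟨hg, hcnt⟩ := counts_of_semM e mk c hmk h2
    exact ⟨h1, hg, hcnt⟩
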